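/- arXiv:1311.7165 — 5 statements merged into one kernel-verified Lean document; each statement's English description precedes it below -/
import Mathlib

section
/- For a kernel K satisfying ∫_{ℝ^N} min(|x|²,1)K(x)dx < ∞, if there exist 0 ≤ s₁ ≤ s₂ such that liminf_{|x|→0⁺} K(x)|x|^{N+2s₁} > 0 and limsup_{|x|→0⁺} K(x)|x|^{N+2s₂} < ∞, then the critical exponent s₀ satisfies s₁ ≤ s₀ ≤ s₂. -/
open MeasureTheory Filter Topology Set
open scoped ENNReal

noncomputable def kernelTail (N : ℕ) (K : EuclideanSpace ℝ (Fin N) → ℝ) (r : ℝ) : ℝ≥0∞ :=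
  ∫⁻ y in {y : EuclideanSpace ℝ (Fin N) | r ≤ ‖y‖}, ENNReal.ofReal (K y)

namespace Stmt3Aux

variable {N : ℕ} {K : EuclideanSpace ℝ (Fin N) → ℝ}

lemma measSet (r : ℝ) : MeasurableSet {y : EuclideanSpace ℝ (Fin N) | r ≤ ‖y‖} :=
  (isClosed_le continuous_const continuous_norm).measurableSet

lemma tail_anti : Antitone (kernelTail N K) := fun a b hab =>
  lintegral_mono_set fun y hy => le_trans hab hy

lemma tail_split {a b : ℝ} (hab : a ≤ b) :
    kernelTail N K a =
      (∫⁻ y in Metric.ball (0 : EuclideanSpace ℝ (Fin N)) b \ Metric.ball 0 a,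
        ENNReal.ofReal (K y)) + kernelTail N K b := by
  unfold kernelTail
  have hset : {y : EuclideanSpace ℝ (Fin N) | a ≤ ‖y‖} =
      (Metric.ball (0 : EuclideanSpace ℝ (Fin N)) b \ Metric.ball 0 a) ∪ {y | b ≤ ‖y‖} := by
    ext y
    simp only [Set.mem_union, Set.mem_diff, Metric.mem_ball, dist_zero_right, Set.mem_setOf_eq,
      not_lt]
    constructor
    · intro h
      rcases lt_or_ge ‖y‖ b with hb | hb
      · exact Or.inl ⟨hb, h⟩
      · exact Or.inr hb
    · rintro (⟨-, h⟩ | h)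
      · exact h
      · exact hab.trans h
  rw [hset, lintegral_union (measSet b) (by
    refine Set.disjoint_left.mpr ?_
    rintro y ⟨hy, -⟩ hy'
    rw [Metric.mem_ball, dist_zero_right] at hy
    exact absurd hy' (not_le.mpr hy))]

lemma nontriv (hN : 1 ≤ N) : Nontrivial (EuclideanSpace ℝ (Fin N)) := by
  haveI : Nonempty (Fin N) := ⟨⟨0, hN⟩⟩
  infer_instance

lemma vol_ball (hN : 1 ≤ N) {r : ℝ} (hr : 0 ≤ r) :
    volume (Metric.ball (0 : EuclideanSpace ℝ (Fin N)) r) =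
      ENNReal.ofReal (r ^ N) * volume (Metric.ball (0 : EuclideanSpace ℝ (Fin N)) 1) := by
  haveI := nontriv hN
  rw [Measure.addHaar_ball volume 0 hr, finrank_euclideanSpace_fin]

lemma vol_annulus (hN : 1 ≤ N) {r : ℝ} (hr : 0 < r) :
    volume (Metric.ball (0 : EuclideanSpace ℝ (Fin N)) (2 * r) \ Metric.ball 0 r) =
      ENNReal.ofReal ((2 * r) ^ N - r ^ N) *
        volume (Metric.ball (0 : EuclideanSpace ℝ (Fin N)) 1) := by
  rw [measure_diff (Metric.ball_subset_ball (by linarith)) measurableSet_ball.nullMeasurableSet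
    measure_ball_lt_top.ne, vol_ball hN (by linarith), vol_ball hN hr.le]
  have h1 : ((2 * r) ^ N : ℝ) = ((2 * r) ^ N - r ^ N) + r ^ N := by ring
  have h2 : (0:ℝ) ≤ (2 * r) ^ N - r ^ N := by
    have := pow_le_pow_left₀ hr.le (by linarith : r ≤ 2 * r) N
    linarith
  conv_lhs => rw [h1, ENNReal.ofReal_add h2 (by positivity), add_mul]
  rw [ENNReal.add_sub_cancel_right (ENNReal.mul_lt_top ENNReal.ofReal_lt_top
      measure_ball_lt_top).ne]

lemma annulus_lower (hN : 1 ≤ N) (hmeas : Measurable K) {c δ p : ℝ} (hc : 0 < c) (hp : 0 ≤ p)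
    (hK : ∀ x : EuclideanSpace ℝ (Fin N), x ≠ 0 → ‖x‖ < δ → c ≤ K x * ‖x‖ ^ p)
    {r : ℝ} (hr : 0 < r) (h2r : 2 * r ≤ δ) :
    ENNReal.ofReal (c * 2 ^ (-p) * (2 ^ N - 1) * r ^ ((N : ℝ) - p)) *
        volume (Metric.ball (0 : EuclideanSpace ℝ (Fin N)) 1) ≤
      ∫⁻ y in Metric.ball (0 : EuclideanSpace ℝ (Fin N)) (2 * r) \ Metric.ball 0 r,
        ENNReal.ofReal (K y) := by
  have h2r0 : (0:ℝ) < 2 * r := by linarith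
  have hpt : ∀ y ∈ Metric.ball (0 : EuclideanSpace ℝ (Fin N)) (2 * r) \ Metric.ball 0 r,
      ENNReal.ofReal (c * (2 * r) ^ (-p)) ≤ ENNReal.ofReal (K y) := by
    rintro y ⟨hy1, hy2⟩
    rw [Metric.mem_ball, dist_zero_right] at hy1
    rw [Metric.mem_ball, dist_zero_right, not_lt] at hy2
    have hy0 : 0 < ‖y‖ := lt_of_lt_of_le hr hy2
    have hyne : y ≠ 0 := by simpa [norm_pos_iff] using hy0
    have hKy := hK y hyne (lt_of_lt_of_le hy1 h2r)
    have hyp : 0 < ‖y‖ ^ p := Real.rpow_pos_of_pos hy0 p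
    apply ENNReal.ofReal_le_ofReal
    have hKge : c / ‖y‖ ^ p ≤ K y := (div_le_iff₀ hyp).mpr hKy
    have hle : ‖y‖ ^ p ≤ (2 * r) ^ p := Real.rpow_le_rpow hy0.le hy1.le hp
    have : c * (2 * r) ^ (-p) = c / (2 * r) ^ p := by
      rw [Real.rpow_neg h2r0.le, div_eq_mul_inv]
    rw [this]
    exact le_trans (by gcongr) hKge
  have hconst : ENNReal.ofReal (c * 2 ^ (-p) * (2 ^ N - 1) * r ^ ((N : ℝ) - p)) *
      volume (Metric.ball (0 : EuclideanSpace ℝ (Fin N)) 1) =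
      ENNReal.ofReal (c * (2 * r) ^ (-p)) *
        volume (Metric.ball (0 : EuclideanSpace ℝ (Fin N)) (2 * r) \ Metric.ball 0 r) := by
    rw [vol_annulus hN hr, ← mul_assoc, ← ENNReal.ofReal_mul (by positivity)]
    congr 2
    have e1 : (2 * r : ℝ) ^ (-p) = 2 ^ (-p) * r ^ (-p) := Real.mul_rpow (by norm_num) hr.le
    have e2 : r ^ ((N:ℝ) - p) = r ^ (N:ℕ) * r ^ (-p) := by
      rw [sub_eq_add_neg, Real.rpow_add hr, Real.rpow_natCast]
    rw [e1, e2, mul_pow]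
    ring
  rw [hconst]
  calc ENNReal.ofReal (c * (2 * r) ^ (-p)) *
      volume (Metric.ball (0 : EuclideanSpace ℝ (Fin N)) (2 * r) \ Metric.ball 0 r)
      = ∫⁻ _ in Metric.ball (0 : EuclideanSpace ℝ (Fin N)) (2 * r) \ Metric.ball 0 r,
          ENNReal.ofReal (c * (2 * r) ^ (-p)) := (setLIntegral_const _ _).symm
    _ ≤ _ := setLIntegral_mono hmeas.ennreal_ofReal hpt

lemma upper_est (hN : 1 ≤ N) (hmeas : Measurable K) {C δ p : ℝ} (hC : 0 ≤ C) (hp : (N:ℝ) < p)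
    (hK : ∀ x : EuclideanSpace ℝ (Fin N), x ≠ 0 → ‖x‖ < δ → K x ≤ C * ‖x‖ ^ (-p))
    {r : ℝ} (hr : 0 < r) :
    (∫⁻ y in Metric.ball (0 : EuclideanSpace ℝ (Fin N)) δ \ Metric.ball 0 r,
        ENNReal.ofReal (K y)) ≤
      ENNReal.ofReal (C * 2 ^ N * r ^ ((N:ℝ) - p)) *
        volume (Metric.ball (0 : EuclideanSpace ℝ (Fin N)) 1) *
        (1 - ENNReal.ofReal (2 ^ ((N:ℝ) - p)))⁻¹ := by
  set v₁ := volume (Metric.ball (0 : EuclideanSpace ℝ (Fin N)) 1) with hv₁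
  set S : ℕ → Set (EuclideanSpace ℝ (Fin N)) := fun k =>
    Metric.ball (0 : EuclideanSpace ℝ (Fin N)) δ ∩
      (Metric.ball 0 (2 ^ (k+1) * r) \ Metric.ball 0 (2 ^ k * r)) with hS
  have hcover : Metric.ball (0 : EuclideanSpace ℝ (Fin N)) δ \ Metric.ball 0 r ⊆ ⋃ k, S k := by
    rintro y ⟨hyδ, hyr⟩
    rw [Metric.mem_ball, dist_zero_right] at hyδ
    rw [Metric.mem_ball, dist_zero_right, not_lt] at hyr
    have hEx : ∃ n : ℕ, ‖y‖ < 2 ^ (n+1) * r := by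
      obtain ⟨n, hn⟩ := pow_unbounded_of_one_lt (‖y‖ / r) (by norm_num : (1:ℝ) < 2)
      rw [div_lt_iff₀ hr] at hn
      refine ⟨n, lt_of_lt_of_le hn ?_⟩
      have : (2:ℝ) ^ n ≤ 2 ^ (n+1) := by
        apply pow_le_pow_right₀ (by norm_num) (Nat.le_succ n)
      nlinarith
    refine Set.mem_iUnion.mpr ⟨Nat.find hEx, ?_, ?_, ?_⟩
    · exact Metric.mem_ball.mpr (by rwa [dist_zero_right])
    · exact Metric.mem_ball.mpr (by rw [dist_zero_right]; exact Nat.find_spec hEx)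
    · rw [Metric.mem_ball, dist_zero_right, not_lt]
      rcases Nat.eq_zero_or_pos (Nat.find hEx) with h0 | hpos
      · rw [h0]; simpa using hyr
      · obtain ⟨j, hj⟩ := Nat.exists_eq_succ_of_ne_zero hpos.ne'
        rw [hj]
        have := Nat.find_min hEx (by omega : j < Nat.find hEx)
        rw [not_lt] at this
        exact this
  have hq0 : (0:ℝ) ≤ 2 ^ ((N:ℝ) - p) := Real.rpow_nonneg (by norm_num) _
  have hterm : ∀ k : ℕ,
      (∫⁻ y in S k, ENNReal.ofReal (K y)) ≤
        (ENNReal.ofReal (C * 2 ^ N * r ^ ((N:ℝ) - p)) * v₁) *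
          ENNReal.ofReal (2 ^ ((N:ℝ) - p)) ^ k := by
    intro k
    have h2k : (0:ℝ) < 2 ^ k * r := by positivity
    have hpt : ∀ y ∈ S k, ENNReal.ofReal (K y) ≤
        ENNReal.ofReal (C * (2 ^ k * r) ^ (-p)) := by
      rintro y ⟨hyδ, hy1, hy2⟩
      rw [Metric.mem_ball, dist_zero_right] at hyδ
      rw [Metric.mem_ball, dist_zero_right, not_lt] at hy2
      have hy0 : 0 < ‖y‖ := lt_of_lt_of_le h2k hy2
      have hyne : y ≠ 0 := by simpa [norm_pos_iff] using hy0
      apply ENNReal.ofReal_le_ofReal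
      calc K y ≤ C * ‖y‖ ^ (-p) := hK y hyne hyδ
        _ ≤ C * (2 ^ k * r) ^ (-p) := by
            apply mul_le_mul_of_nonneg_left _ hC
            have hpN : (0:ℝ) < p := lt_of_le_of_lt (Nat.cast_nonneg N) hp
            exact Real.rpow_le_rpow_of_nonpos h2k hy2 (by linarith)
    have hSsub : S k ⊆ Metric.ball (0 : EuclideanSpace ℝ (Fin N)) (2 ^ (k+1) * r) :=
      Set.inter_subset_right.trans Set.diff_subset
    have hkey : C * (2 ^ k * r) ^ (-p) * (2 ^ (k+1) * r) ^ N =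
        C * 2 ^ N * r ^ ((N:ℝ) - p) * (2 ^ ((N:ℝ) - p)) ^ k := by
      have hA : ((2:ℝ) ^ k) ^ (-p) = ((2:ℝ) ^ (-p)) ^ k := by
        rw [← Real.rpow_natCast (2:ℝ) k, ← Real.rpow_mul (by norm_num), mul_comm ((k:ℝ)) (-p),
          Real.rpow_mul (by norm_num), Real.rpow_natCast]
      have hB : (2:ℝ) ^ ((N:ℝ) - p) = 2 ^ N * 2 ^ (-p) := by
        rw [sub_eq_add_neg, Real.rpow_add (by norm_num), Real.rpow_natCast]
      have hC2 : r ^ ((N:ℝ) - p) = r ^ (N:ℕ) * r ^ (-p) := by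
        rw [sub_eq_add_neg, Real.rpow_add hr, Real.rpow_natCast]
      rw [Real.mul_rpow (by positivity) hr.le, hA, hB, hC2, mul_pow, mul_pow]
      ring
    calc (∫⁻ y in S k, ENNReal.ofReal (K y))
        ≤ ∫⁻ _ in S k, ENNReal.ofReal (C * (2 ^ k * r) ^ (-p)) :=
          setLIntegral_mono measurable_const hpt
      _ = ENNReal.ofReal (C * (2 ^ k * r) ^ (-p)) * volume (S k) := setLIntegral_const _ _
      _ ≤ ENNReal.ofReal (C * (2 ^ k * r) ^ (-p)) *
            volume (Metric.ball (0 : EuclideanSpace ℝ (Fin N)) (2 ^ (k+1) * r)) := by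
          exact mul_le_mul_right (measure_mono hSsub) _
      _ = ENNReal.ofReal (C * (2 ^ k * r) ^ (-p)) *
            (ENNReal.ofReal ((2 ^ (k+1) * r) ^ N) * v₁) := by
          rw [vol_ball hN (by positivity)]
      _ = (ENNReal.ofReal (C * 2 ^ N * r ^ ((N:ℝ) - p)) * v₁) *
            ENNReal.ofReal (2 ^ ((N:ℝ) - p)) ^ k := by
          rw [← mul_assoc, ← ENNReal.ofReal_mul (by positivity), hkey,
            ENNReal.ofReal_mul (by positivity), ← ENNReal.ofReal_pow hq0]
          ring
  calc (∫⁻ y in Metric.ball (0 : EuclideanSpace ℝ (Fin N)) δ \ Metric.ball 0 r,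
        ENNReal.ofReal (K y))
      ≤ ∫⁻ y in ⋃ k, S k, ENNReal.ofReal (K y) := lintegral_mono_set hcover
    _ ≤ ∑' k, ∫⁻ y in S k, ENNReal.ofReal (K y) := lintegral_iUnion_le _ _
    _ ≤ ∑' k : ℕ, (ENNReal.ofReal (C * 2 ^ N * r ^ ((N:ℝ) - p)) * v₁) *
          ENNReal.ofReal (2 ^ ((N:ℝ) - p)) ^ k := ENNReal.tsum_le_tsum hterm
    _ = (ENNReal.ofReal (C * 2 ^ N * r ^ ((N:ℝ) - p)) * v₁) *
          (1 - ENNReal.ofReal (2 ^ ((N:ℝ) - p)))⁻¹ := by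
        rw [ENNReal.tsum_mul_left, ENNReal.tsum_geometric]

lemma ev_small {P : EuclideanSpace ℝ (Fin N) → Prop}
    (h : ∀ᶠ x in 𝓝[≠] (0 : EuclideanSpace ℝ (Fin N)), P x) :
    ∃ δ > 0, ∀ x : EuclideanSpace ℝ (Fin N), x ≠ 0 → ‖x‖ < δ → P x := by
  rw [eventually_nhdsWithin_iff] at h
  rcases Metric.eventually_nhds_iff.mp h with ⟨δ, hδ, H⟩
  exact ⟨δ, hδ, fun x hx hxδ => H (by simpa [dist_eq_norm] using hxδ) hx⟩

lemma ann_sub (r b : ℝ) :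
    Metric.ball (0 : EuclideanSpace ℝ (Fin N)) b \ Metric.ball 0 r ⊆ {y | r ≤ ‖y‖} := by
  rintro y ⟨-, hy⟩
  rw [Metric.mem_ball, dist_zero_right, not_lt] at hy
  exact hy

lemma rpow_to_zero {a : ℝ} (ha : 0 < a) :
    Tendsto (fun r : ℝ => ENNReal.ofReal (r ^ a)) (𝓝[>] (0:ℝ)) (𝓝 0) := by
  have h1 : Tendsto (fun r : ℝ => r ^ a) (𝓝 (0:ℝ)) (𝓝 ((0:ℝ) ^ a)) :=
    (Real.continuousAt_rpow_const 0 a (Or.inr ha.le)).tendsto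
  rw [Real.zero_rpow ha.ne'] at h1
  have h2 : Tendsto (fun r : ℝ => r ^ a) (𝓝[>] (0:ℝ)) (𝓝 0) :=
    h1.mono_left nhdsWithin_le_nhds
  simpa [Function.comp_def] using (ENNReal.continuous_ofReal.tendsto 0).comp h2

lemma rpow_to_top {a : ℝ} (ha : a < 0) :
    Tendsto (fun r : ℝ => r ^ a) (𝓝[>] (0:ℝ)) atTop := by
  have h := (tendsto_rpow_atTop (by linarith : 0 < -a)).comp
    (tendsto_inv_nhdsGT_zero (𝕜 := ℝ))
  refine h.congr' ?_
  filter_upwards [self_mem_nhdsWithin] with r hr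
  have hr0 : (0:ℝ) < r := hr
  rw [Function.comp_apply, Real.inv_rpow hr0.le, ← Real.rpow_neg hr0.le, neg_neg]

end Stmt3Aux

def kernelIntegrable (N : ℕ) (K : EuclideanSpace ℝ (Fin N) → ℝ) : Prop :=
  ∫⁻ x : EuclideanSpace ℝ (Fin N), ENNReal.ofReal (min (‖x‖ ^ 2) 1 * K x) < ⊤

noncomputable def kernelS0 (N : ℕ) (K : EuclideanSpace ℝ (Fin N) → ℝ) : ℝ :=
  sSup {s : ℝ | 0 ≤ s ∧
    Tendsto (fun r : ℝ => ENNReal.ofReal (r ^ (2 * s)) * kernelTail N K r) (𝓝[>] (0 : ℝ)) (𝓝 ⊤)}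

open Stmt3Aux

theorem stmt3 (N : ℕ) (hN : 1 ≤ N) (K : EuclideanSpace ℝ (Fin N) → ℝ)
    (hmeas : Measurable K)
    (hpos : ∀ x : EuclideanSpace ℝ (Fin N), x ≠ 0 → 0 < K x)
    (hint : kernelIntegrable N K)
    (s₁ s₂ : ℝ) (hs₁ : 0 ≤ s₁) (hs₁₂ : s₁ ≤ s₂)
    (hlower : ∃ c : ℝ, 0 < c ∧
      ∀ᶠ x in 𝓝[≠] (0 : EuclideanSpace ℝ (Fin N)), c ≤ K x * ‖x‖ ^ ((N : ℝ) + 2 * s₁))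
    (hupper : ∃ C : ℝ,
      ∀ᶠ x in 𝓝[≠] (0 : EuclideanSpace ℝ (Fin N)), K x * ‖x‖ ^ ((N : ℝ) + 2 * s₂) ≤ C) :
    s₁ ≤ kernelS0 N K ∧ kernelS0 N K ≤ s₂ := by
  classical
  set v₁ := volume (Metric.ball (0 : EuclideanSpace ℝ (Fin N)) 1) with hv₁def
  have hv₁pos : 0 < v₁ := Metric.measure_ball_pos _ _ one_pos
  have hv₁top : v₁ < ⊤ := measure_ball_lt_top
  set S : Set ℝ := {s : ℝ | 0 ≤ s ∧
    Tendsto (fun r : ℝ => ENNReal.ofReal (r ^ (2 * s)) * kernelTail N K r)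
      (𝓝[>] (0 : ℝ)) (𝓝 ⊤)} with hSdef
  have hkS : kernelS0 N K = sSup S := rfl
  -- lower bound machinery
  obtain ⟨c, hc, hevc⟩ := hlower
  obtain ⟨δ₀, hδ₀, hKl⟩ := ev_small hevc
  set p₁ : ℝ := (N : ℝ) + 2 * s₁ with hp₁def
  set c₀ : ℝ := c * 2 ^ (-p₁) * (2 ^ N - 1) with hc₀def
  have h2N : (1:ℝ) < 2 ^ N := one_lt_pow₀ (by norm_num) (by omega)
  have hc₀ : 0 < c₀ := by
    have : (0:ℝ) < 2 ^ (-p₁) := Real.rpow_pos_of_pos (by norm_num) _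
    rw [hc₀def]
    have h2 := mul_pos (mul_pos hc this) (sub_pos.mpr h2N)
    linarith
  have hlow : ∀ r : ℝ, 0 < r → 2 * r ≤ δ₀ →
      ENNReal.ofReal (c₀ * r ^ (-(2 * s₁))) * v₁ ≤
        ∫⁻ y in Metric.ball (0 : EuclideanSpace ℝ (Fin N)) (2 * r) \ Metric.ball 0 r,
          ENNReal.ofReal (K y) := by
    intro r hr h2r
    have := annulus_lower hN hmeas hc (by positivity : (0:ℝ) ≤ p₁) hKl hr h2r
    rwa [show (N:ℝ) - p₁ = -(2 * s₁) by rw [hp₁def]; ring] at this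
  have hmemA : ∀ s : ℝ, 0 ≤ s → s < s₁ → s ∈ S := by
    intro s hs hss₁
    refine ⟨hs, ?_⟩
    have hg : Tendsto (fun r : ℝ => ENNReal.ofReal (c₀ * r ^ (2 * s - 2 * s₁)) * v₁)
        (𝓝[>] (0:ℝ)) (𝓝 ⊤) := by
      have h1 : Tendsto (fun r : ℝ => c₀ * r ^ (2 * s - 2 * s₁)) (𝓝[>] (0:ℝ)) atTop :=
        (rpow_to_top (by linarith)).const_mul_atTop hc₀
      have h3 := ENNReal.tendsto_ofReal_atTop.comp h1
      have h4 := ENNReal.Tendsto.mul_const (b := v₁) h3 (Or.inl (by simp : (⊤:ℝ≥0∞) ≠ 0))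
      rwa [ENNReal.top_mul hv₁pos.ne'] at h4
    refine tendsto_nhds_top_mono hg ?_
    filter_upwards [Ioo_mem_nhdsGT_of_mem
      (Set.left_mem_Ico.mpr (by positivity : (0:ℝ) < δ₀ / 2))] with r hr
    obtain ⟨hr0, hrδ⟩ := hr
    have h2r : 2 * r ≤ δ₀ := by linarith
    calc ENNReal.ofReal (c₀ * r ^ (2 * s - 2 * s₁)) * v₁
        = ENNReal.ofReal (r ^ (2 * s)) * (ENNReal.ofReal (c₀ * r ^ (-(2 * s₁))) * v₁) := by
          rw [← mul_assoc, ← ENNReal.ofReal_mul (by positivity)]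
          congr 2
          rw [show (2 * s - 2 * s₁ : ℝ) = 2 * s + -(2 * s₁) by ring, Real.rpow_add hr0]
          ring
      _ ≤ ENNReal.ofReal (r ^ (2 * s)) * kernelTail N K r := by
          apply mul_le_mul_right
          refine le_trans (hlow r hr0 h2r) (le_trans ?_ (le_of_eq rfl))
          exact lintegral_mono_set (ann_sub r (2 * r))
  have hmemB : s₁ = 0 → (0:ℝ) ∈ S := by
    intro h10
    set c₄ : ℝ≥0∞ := ENNReal.ofReal c₀ * v₁ with hc₄def
    have hc₄ : c₄ ≠ 0 := by
      rw [hc₄def]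
      exact (ENNReal.mul_pos (ENNReal.ofReal_pos.mpr hc₀).ne' hv₁pos.ne').ne'
    have hann : ∀ r : ℝ, 0 < r → 2 * r ≤ δ₀ →
        c₄ ≤ ∫⁻ y in Metric.ball (0 : EuclideanSpace ℝ (Fin N)) (2 * r) \ Metric.ball 0 r,
          ENNReal.ofReal (K y) := by
      intro r hr h2r
      have := hlow r hr h2r
      rw [h10] at this
      simpa using this
    have hind : ∀ m : ℕ, (m : ℝ≥0∞) * c₄ ≤ kernelTail N K (δ₀ / 2 ^ m) := by
      intro m
      induction m with
      | zero => simp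
      | succ m ih =>
        have hrm : (0:ℝ) < δ₀ / 2 ^ (m+1) := by positivity
        have h2rm : 2 * (δ₀ / 2 ^ (m+1)) = δ₀ / 2 ^ m := by
          field_simp [pow_succ]; ring
        have hab : δ₀ / 2 ^ (m+1) ≤ δ₀ / 2 ^ m := by
          apply div_le_div_of_nonneg_left hδ₀.le (by positivity)
          exact pow_le_pow_right₀ (by norm_num) (Nat.le_succ m)
        rw [tail_split hab]
        have h1 : c₄ ≤ ∫⁻ y in Metric.ball (0 : EuclideanSpace ℝ (Fin N)) (δ₀ / 2 ^ m) \
            Metric.ball 0 (δ₀ / 2 ^ (m+1)), ENNReal.ofReal (K y) := by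
          have := hann (δ₀ / 2 ^ (m+1)) hrm
            (by rw [h2rm]; exact div_le_self hδ₀.le (one_le_pow₀ (by norm_num)))
          rwa [h2rm] at this
        calc ((m + 1 : ℕ) : ℝ≥0∞) * c₄ = c₄ + (m : ℝ≥0∞) * c₄ := by push_cast; ring
          _ ≤ _ := add_le_add h1 ih
    refine ⟨le_refl 0, ?_⟩
    simp only [mul_zero, Real.rpow_zero, ENNReal.ofReal_one, one_mul]
    apply ENNReal.tendsto_nhds_top
    intro n
    have htop : Tendsto (fun m : ℕ => (m : ℝ≥0∞) * c₄) atTop (𝓝 ⊤) := by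
      have := ENNReal.Tendsto.mul_const (b := c₄) ENNReal.tendsto_nat_nhds_top
        (Or.inl (by simp : (⊤:ℝ≥0∞) ≠ 0))
      rwa [ENNReal.top_mul hc₄] at this
    obtain ⟨m, hm⟩ := (htop.eventually (eventually_gt_nhds
      (ENNReal.natCast_lt_top n))).exists
    filter_upwards [Ioo_mem_nhdsGT_of_mem
      (Set.left_mem_Ico.mpr (by positivity : (0:ℝ) < δ₀ / 2 ^ m))] with r hr
    exact lt_of_lt_of_le hm ((hind m).trans (tail_anti hr.2.le))
  -- upper bound : every element of S is ≤ s₂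
  have hs₂0 : 0 ≤ s₂ := le_trans hs₁ hs₁₂
  have hS2 : ∀ s ∈ S, s ≤ s₂ := by
    rintro s ⟨hs0, hst⟩
    by_contra hgt
    push_neg at hgt
    obtain ⟨C, hevC⟩ := hupper
    obtain ⟨δ₁, hδ₁, hKu⟩ := ev_small hevC
    set C' : ℝ := max C 0 with hC'def
    have hC' : 0 ≤ C' := le_max_right _ _
    set δ : ℝ := min δ₁ 1 with hδdef
    have hδ : 0 < δ := lt_min hδ₁ one_pos
    have hδ1 : δ ≤ 1 := min_le_right _ _
    set s₃ : ℝ := (s₂ + s) / 2 with hs₃def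
    have h23 : s₂ < s₃ := by rw [hs₃def]; linarith
    have h3s : s₃ < s := by rw [hs₃def]; linarith
    have h30 : 0 < s₃ := by linarith
    set p : ℝ := (N : ℝ) + 2 * s₃ with hpdef
    have hpN : (N:ℝ) < p := by rw [hpdef]; linarith
    have hKu' : ∀ x : EuclideanSpace ℝ (Fin N), x ≠ 0 → ‖x‖ < δ →
        K x ≤ C' * ‖x‖ ^ (-p) := by
      intro x hx hxδ
      have hx0 : 0 < ‖x‖ := norm_pos_iff.mpr hx
      have hx1 : ‖x‖ ≤ 1 := le_trans hxδ.le hδ1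
      have h1 := hKu x hx (lt_of_lt_of_le hxδ (min_le_left _ _))
      have ht2 : 0 < ‖x‖ ^ ((N:ℝ) + 2 * s₂) := Real.rpow_pos_of_pos hx0 _
      have h2 : K x ≤ C / ‖x‖ ^ ((N:ℝ) + 2 * s₂) := (le_div_iff₀ ht2).mpr h1
      have h3 : C / ‖x‖ ^ ((N:ℝ) + 2 * s₂) ≤ C' / ‖x‖ ^ ((N:ℝ) + 2 * s₂) := by
        gcongr
        exact le_max_left _ _
      have h4 : C' / ‖x‖ ^ ((N:ℝ) + 2 * s₂) = C' * ‖x‖ ^ (-((N:ℝ) + 2 * s₂)) := by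
        rw [Real.rpow_neg hx0.le, div_eq_mul_inv]
      have h5 : ‖x‖ ^ (-((N:ℝ) + 2 * s₂)) = ‖x‖ ^ (-p) * ‖x‖ ^ (2 * s₃ - 2 * s₂) := by
        rw [← Real.rpow_add hx0]
        congr 1
        rw [hpdef]; ring
      have h6 : ‖x‖ ^ (2 * s₃ - 2 * s₂) ≤ 1 :=
        Real.rpow_le_one hx0.le hx1 (by linarith)
      calc K x ≤ C' * ‖x‖ ^ (-((N:ℝ) + 2 * s₂)) := by rw [← h4]; exact h2.trans h3
        _ = C' * (‖x‖ ^ (-p) * ‖x‖ ^ (2 * s₃ - 2 * s₂)) := by rw [h5]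
        _ ≤ C' * (‖x‖ ^ (-p) * 1) := by
            apply mul_le_mul_of_nonneg_left _ hC'
            exact mul_le_mul_of_nonneg_left h6 (Real.rpow_nonneg hx0.le _)
        _ = C' * ‖x‖ ^ (-p) := by rw [mul_one]
    set T := kernelTail N K δ with hTdef
    have hTfin : T < ⊤ := by
      have hm : (0:ℝ) < min (δ ^ 2) 1 := lt_min (by positivity) one_pos
      have hmeas2 : Measurable fun y : EuclideanSpace ℝ (Fin N) =>
          ENNReal.ofReal (min (‖y‖ ^ 2) 1 * K y) :=
        (((measurable_norm.pow_const 2).min measurable_const).mul hmeas).ennreal_ofReal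
      have h1 : ENNReal.ofReal (min (δ ^ 2) 1) * T ≤
          ∫⁻ x : EuclideanSpace ℝ (Fin N), ENNReal.ofReal (min (‖x‖ ^ 2) 1 * K x) := by
        rw [hTdef]
        unfold kernelTail
        rw [← lintegral_const_mul _ hmeas.ennreal_ofReal]
        refine le_trans (setLIntegral_mono hmeas2 ?_) (setLIntegral_le_lintegral _ _)
        intro y hy
        have hyδ : δ ≤ ‖y‖ := hy
        have hy0 : 0 < ‖y‖ := lt_of_lt_of_le hδ hyδ
        have hKy : 0 ≤ K y := (hpos y (by simpa [norm_pos_iff] using hy0)).le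
        rw [← ENNReal.ofReal_mul (le_of_lt hm)]
        apply ENNReal.ofReal_le_ofReal
        apply mul_le_mul_of_nonneg_right _ hKy
        exact min_le_min (by nlinarith) le_rfl
      by_contra htop
      push_neg at htop
      have hT : T = ⊤ := top_le_iff.mp htop
      rw [hT, ENNReal.mul_top (ENNReal.ofReal_pos.mpr hm).ne'] at h1
      exact hint.ne (top_le_iff.mp h1)
    set q := ENNReal.ofReal (2 ^ (-(2 * s₃))) with hqdef
    have hq1 : q < 1 := by
      rw [hqdef]
      refine lt_of_lt_of_le (ENNReal.ofReal_lt_ofReal_iff one_pos |>.mpr ?_) (by simp)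
      exact Real.rpow_lt_one_of_one_lt_of_neg one_lt_two (by linarith)
    have hqinv : (1 - q)⁻¹ < ⊤ := ENNReal.inv_lt_top.mpr (tsub_pos_of_lt hq1)
    set κ := ENNReal.ofReal (C' * 2 ^ N) * v₁ * (1 - q)⁻¹ with hκdef
    have hκ : κ < ⊤ :=
      ENNReal.mul_lt_top (ENNReal.mul_lt_top ENNReal.ofReal_lt_top hv₁top) hqinv
    have hbound : ∀ᶠ r in 𝓝[>] (0:ℝ),
        ENNReal.ofReal (r ^ (2 * s)) * kernelTail N K r ≤
          ENNReal.ofReal (r ^ (2 * s - 2 * s₃)) * κ + ENNReal.ofReal (r ^ (2 * s)) * T := by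
      filter_upwards [Ioo_mem_nhdsGT_of_mem (Set.left_mem_Ico.mpr hδ)] with r hr
      obtain ⟨hr0, hrδ⟩ := hr
      have hsplit := tail_split (N := N) (K := K) (le_of_lt hrδ)
      have hup := upper_est hN hmeas hC' hpN hKu' hr0
      have hNp : (N:ℝ) - p = -(2 * s₃) := by rw [hpdef]; ring
      rw [hNp] at hup
      rw [hsplit, mul_add]
      apply add_le_add _ le_rfl
      calc ENNReal.ofReal (r ^ (2 * s)) *
          ∫⁻ y in Metric.ball (0 : EuclideanSpace ℝ (Fin N)) δ \ Metric.ball 0 r,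
            ENNReal.ofReal (K y)
          ≤ ENNReal.ofReal (r ^ (2 * s)) *
              (ENNReal.ofReal (C' * 2 ^ N * r ^ (-(2 * s₃))) * v₁ * (1 - q)⁻¹) :=
            mul_le_mul_right hup _
        _ = ENNReal.ofReal (r ^ (2 * s - 2 * s₃)) * κ := by
            rw [hκdef, ENNReal.ofReal_mul (by positivity : (0:ℝ) ≤ C' * 2 ^ N),
              show (2 * s - 2 * s₃ : ℝ) = 2 * s + -(2 * s₃) by ring,
              Real.rpow_add hr0, ENNReal.ofReal_mul (by positivity)]
            ring_nf
            rw [ENNReal.ofReal_mul (by positivity)]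
            ring
    have hg0 : Tendsto (fun r : ℝ => ENNReal.ofReal (r ^ (2 * s - 2 * s₃)) * κ +
        ENNReal.ofReal (r ^ (2 * s)) * T) (𝓝[>] (0:ℝ)) (𝓝 0) := by
      have t1 := ENNReal.Tendsto.mul_const (rpow_to_zero (by linarith : (0:ℝ) < 2 * s - 2 * s₃))
        (Or.inr hκ.ne)
      have t2 := ENNReal.Tendsto.mul_const
        (rpow_to_zero (by linarith : (0:ℝ) < 2 * s)) (Or.inr hTfin.ne)
      simpa using t1.add t2
    have hf0 : Tendsto (fun r : ℝ => ENNReal.ofReal (r ^ (2 * s)) * kernelTail N K r)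
        (𝓝[>] (0:ℝ)) (𝓝 0) :=
      tendsto_of_tendsto_of_tendsto_of_le_of_le' tendsto_const_nhds hg0
        (Eventually.of_forall fun r => zero_le) hbound
    exact absurd (tendsto_nhds_unique hst hf0) (by simp)
  -- conclusion
  have hbdd : BddAbove S := ⟨s₂, fun s hs => hS2 s hs⟩
  have hne : S.Nonempty := by
    rcases eq_or_lt_of_le hs₁ with h10 | h10
    · exact ⟨0, hmemB h10.symm⟩
    · exact ⟨s₁ / 2, hmemA (s₁ / 2) (by linarith) (by linarith)⟩
  rw [hkS]
  constructor
  · rcases eq_or_lt_of_le hs₁ with h10 | h10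
    · rw [← h10]
      exact le_csSup hbdd (hmemB h10.symm)
    · by_contra hlt
      push_neg at hlt
      have hts : max ((sSup S + s₁) / 2) 0 < s₁ := max_lt (by linarith) h10
      have h1 := le_csSup hbdd (hmemA _ (le_max_right _ _) hts)
      have h2 : (sSup S + s₁) / 2 ≤ max ((sSup S + s₁) / 2) 0 := le_max_left _ _
      linarith
  · exact csSup_le hne hS2
end

section
/- Let K satisfy ∫_{ℝ^N} min(|x|²,1)K(x)dx < ∞, the monotonicity K(x) ≥ K(y) for |x| ≤ |y|, and s₀ > 0 where s₀ is the critical kernel exponent. Then for any s ∈ (0, s₀), limsup_{r→0⁺} r^{N+2s} inf_{|x|=r} K(x) = +∞; i.e., there is a sequence r_n → 0⁺ with r_n^{N+2s} inf_{|x|=r_n} K(x) → +∞. -/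
open MeasureTheory Filter Topology Set
open scoped ENNReal

lemma dyadic_between {x : ℝ} (hx : 1 ≤ x) : ∃ j : ℕ, (2:ℝ)^j ≤ x ∧ x < 2^(j+1) := by
  have hx0 : (1:ℕ) ≤ ⌊x⌋₊ := Nat.one_le_iff_ne_zero.mpr (by
    simp [Nat.floor_eq_zero]; linarith [Nat.floor_le (by linarith : (0:ℝ) ≤ x)])
  refine ⟨Nat.log 2 ⌊x⌋₊, ?_, ?_⟩
  · calc ((2:ℝ)^Nat.log 2 ⌊x⌋₊) = ((2^Nat.log 2 ⌊x⌋₊ : ℕ) : ℝ) := by push_cast; ring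
    _ ≤ (⌊x⌋₊ : ℝ) := by exact_mod_cast Nat.pow_log_le_self 2 (by omega)
    _ ≤ x := Nat.floor_le (by linarith)
  · have h1 : ⌊x⌋₊ < 2 ^ (Nat.log 2 ⌊x⌋₊ + 1) := Nat.lt_pow_succ_log_self (by norm_num) _
    have h2 : x < (⌊x⌋₊ : ℝ) + 1 := Nat.lt_floor_add_one x
    have : ((⌊x⌋₊ : ℝ) + 1) ≤ ((2:ℝ) ^ (Nat.log 2 ⌊x⌋₊ + 1)) := by
      exact_mod_cast Nat.succ_le_of_lt h1
    linarith

lemma real_id (M : ℝ) (N j : ℕ) (s r : ℝ) (hr : 0 < r) :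
    M * ((2:ℝ)^j * r) ^ (-((N:ℝ) + 2*s)) * ((2:ℝ)^(j+1) * r)^N
      = M * 2^N * r ^ (-(2*s)) * ((2:ℝ) ^ (-(2*s)))^j := by
  have h2 : (0:ℝ) < 2 := two_pos
  rw [Real.mul_rpow (by positivity) hr.le]
  rw [show ((2:ℝ)^(j+1) * r)^N = ((2:ℝ)^(j+1))^N * r^N by ring]
  rw [← Real.rpow_natCast ((2:ℝ)^(j+1)) N, ← Real.rpow_natCast ((2:ℝ)) (j+1),
      ← Real.rpow_natCast ((2:ℝ)) j, ← Real.rpow_natCast r N,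
      ← Real.rpow_mul h2.le, ← Real.rpow_mul h2.le,
      ← Real.rpow_natCast ((2:ℝ)^(-(2*s))) j, ← Real.rpow_mul h2.le,
      ← Real.rpow_natCast ((2:ℝ)) N]
  push_cast
  rw [show M * ((2:ℝ) ^ ((j:ℝ) * (-((N:ℝ)+2*s))) * r ^ (-((N:ℝ)+2*s))) * ((2:ℝ)^(((j:ℝ)+1)*(N:ℝ)) * r^(N:ℝ))
        = M * ((2:ℝ) ^ ((j:ℝ) * (-((N:ℝ)+2*s))) * (2:ℝ)^(((j:ℝ)+1)*(N:ℝ))) * (r ^ (-((N:ℝ)+2*s)) * r^(N:ℝ)) by ring]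
  rw [← Real.rpow_add h2, ← Real.rpow_add hr]
  rw [show (j:ℝ) * (-((N:ℝ)+2*s)) + ((j:ℝ)+1)*(N:ℝ) = (N:ℝ) + (-(2*s)*(j:ℝ)) by ring,
      show -((N:ℝ)+2*s) + (N:ℝ) = -(2*s) by ring,
      Real.rpow_add h2]
  ring

lemma tail_bound (N : ℕ) (hN : 1 ≤ N) (K : EuclideanSpace ℝ (Fin N) → ℝ)
    (hpos : ∀ x : EuclideanSpace ℝ (Fin N), x ≠ 0 → 0 < K x)
    (hmono : ∀ x y : EuclideanSpace ℝ (Fin N), x ≠ 0 → y ≠ 0 → ‖x‖ ≤ ‖y‖ → K y ≤ K x)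
    (e : EuclideanSpace ℝ (Fin N)) (he : ‖e‖ = 1)
    {s M ε : ℝ} (hs : 0 < s) (hM : 0 ≤ M) (hε : 0 < ε)
    (hbd : ∀ ρ : ℝ, 0 < ρ → ρ < ε → ρ ^ ((N:ℝ) + 2*s) * K (ρ • e) ≤ M)
    {r : ℝ} (hr : 0 < r) (hrε : r < ε) :
    kernelTail N K r ≤ ENNReal.ofReal (M * 2^N * r ^ (-(2*s))) *
      ((1 - ENNReal.ofReal ((2:ℝ) ^ (-(2*s))))⁻¹ * volume (Metric.ball (0 : EuclideanSpace ℝ (Fin N)) 1))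
      + kernelTail N K ε := by
  haveI : Nonempty (Fin N) := ⟨⟨0, hN⟩⟩
  set c₁ : ℝ≥0∞ := volume (Metric.ball (0 : EuclideanSpace ℝ (Fin N)) 1) with hc₁
  set q : ℝ≥0∞ := ENNReal.ofReal ((2:ℝ) ^ (-(2*s))) with hq
  set A : ℝ≥0∞ := ENNReal.ofReal (M * 2^N * r ^ (-(2*s))) with hA
  set S : ℕ → Set (EuclideanSpace ℝ (Fin N)) := fun j => {y | (2:ℝ)^j * r ≤ ‖y‖ ∧ ‖y‖ < 2^(j+1) * r ∧ ‖y‖ < ε} with hS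
  have hbj : ∀ j : ℕ, (∫⁻ y in S j, ENNReal.ofReal (K y)) ≤ A * (q^j * c₁) := by
    intro j
    by_cases hcase : (2:ℝ)^j * r < ε
    · have hρ : (0:ℝ) < (2:ℝ)^j * r := by positivity
      have hρe : ‖((2:ℝ)^j * r) • e‖ = (2:ℝ)^j * r := by
        rw [norm_smul, he, Real.norm_eq_abs, abs_of_pos hρ, mul_one]
      have hne : ((2:ℝ)^j * r) • e ≠ 0 := by
        intro h; rw [h, norm_zero] at hρe; linarith
      calc (∫⁻ y in S j, ENNReal.ofReal (K y))
          ≤ ∫⁻ _ in S j, ENNReal.ofReal (K (((2:ℝ)^j * r) • e)) := by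
            refine setLIntegral_mono measurable_const ?_
            intro y hy
            obtain ⟨h1, h2, h3⟩ := hy
            have hy0 : y ≠ 0 := by
              intro h; rw [h, norm_zero] at h1; linarith
            exact ENNReal.ofReal_le_ofReal
              (hmono _ y hne hy0 (by rw [hρe]; exact h1))
        _ = ENNReal.ofReal (K (((2:ℝ)^j * r) • e)) * volume (S j) := setLIntegral_const _ _
        _ ≤ ENNReal.ofReal (M * ((2:ℝ)^j * r) ^ (-((N:ℝ) + 2*s))) *
              volume (Metric.ball (0 : EuclideanSpace ℝ (Fin N)) ((2:ℝ)^(j+1) * r)) := by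
            refine mul_le_mul' (ENNReal.ofReal_le_ofReal ?_) (measure_mono ?_)
            · have hp : (0:ℝ) < ((2:ℝ)^j * r) ^ ((N:ℝ) + 2*s) := Real.rpow_pos_of_pos hρ _
              rw [Real.rpow_neg hρ.le, ← div_eq_mul_inv, le_div_iff₀ hp]
              nlinarith [hbd ((2:ℝ)^j * r) hρ hcase]
            · intro y hy
              rw [Metric.mem_ball, dist_zero_right]
              exact hy.2.1
        _ = ENNReal.ofReal (M * ((2:ℝ)^j * r) ^ (-((N:ℝ) + 2*s))) *
              (ENNReal.ofReal (((2:ℝ)^(j+1) * r) ^ N) * c₁) := by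
            rw [Measure.addHaar_ball volume (0:EuclideanSpace ℝ (Fin N)) (by positivity), finrank_euclideanSpace_fin]
        _ = A * (q^j * c₁) := by
            rw [← mul_assoc, ← ENNReal.ofReal_mul (by positivity),
                mul_assoc M, ← mul_assoc M, real_id M N j s r hr,
                ENNReal.ofReal_mul (by positivity), ← ENNReal.ofReal_pow (by positivity),
                mul_assoc]
    · have hSe : S j = ∅ := by
        ext y
        simp only [hS, Set.mem_setOf_eq, Set.mem_empty_iff_false, iff_false, not_and]
        intro h1 h2
        push_neg at hcase
        intro h3
        linarith
      rw [hSe, setLIntegral_empty]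
      exact zero_le
  have hUsub : {y : EuclideanSpace ℝ (Fin N) | r ≤ ‖y‖ ∧ ‖y‖ < ε} ⊆ ⋃ j, S j := by
    intro y hy
    obtain ⟨h1, h2⟩ := hy
    obtain ⟨j, hj1, hj2⟩ := dyadic_between (by rw [le_div_iff₀ hr] at *; linarith [(one_le_div hr).mpr h1] : 1 ≤ ‖y‖ / r)
    refine Set.mem_iUnion.mpr ⟨j, ?_, ?_, h2⟩
    · rw [le_div_iff₀ hr] at hj1; linarith
    · rw [div_lt_iff₀ hr] at hj2; linarith
  calc kernelTail N K r
      ≤ ∫⁻ y in {y : EuclideanSpace ℝ (Fin N) | r ≤ ‖y‖ ∧ ‖y‖ < ε} ∪ {y : EuclideanSpace ℝ (Fin N) | ε ≤ ‖y‖}, ENNReal.ofReal (K y) := by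
        refine lintegral_mono_set ?_
        intro y hy
        rcases lt_or_ge ‖y‖ ε with h | h
        · exact Or.inl ⟨hy, h⟩
        · exact Or.inr h
    _ ≤ (∫⁻ y in {y : EuclideanSpace ℝ (Fin N) | r ≤ ‖y‖ ∧ ‖y‖ < ε}, ENNReal.ofReal (K y)) + kernelTail N K ε :=
        lintegral_union_le _ _ _
    _ ≤ (∑' j, ∫⁻ y in S j, ENNReal.ofReal (K y)) + kernelTail N K ε := by
        gcongr
        exact le_trans (lintegral_mono_set hUsub) (lintegral_iUnion_le _ _)
    _ ≤ (∑' j, A * (q^j * c₁)) + kernelTail N K ε := by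
        gcongr with j
        exact hbj j
    _ = A * ((1 - q)⁻¹ * c₁) + kernelTail N K ε := by
        rw [ENNReal.tsum_mul_left, ENNReal.tsum_mul_right, ENNReal.tsum_geometric]

lemma tail_ne_top (N : ℕ) (K : EuclideanSpace ℝ (Fin N) → ℝ)
    (hmeas : Measurable K) (hint : kernelIntegrable N K) {ε : ℝ} (hε : 0 < ε) :
    kernelTail N K ε ≠ ⊤ := by
  set c : ℝ := min (ε^2) 1 with hc
  have hc0 : 0 < c := lt_min (by positivity) one_pos
  have key : kernelTail N K ε ≤
      ENNReal.ofReal c⁻¹ * ∫⁻ x, ENNReal.ofReal (min (‖x‖ ^ 2) 1 * K x) := by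
    calc kernelTail N K ε
        ≤ ∫⁻ y in {y : EuclideanSpace ℝ (Fin N) | ε ≤ ‖y‖},
            ENNReal.ofReal c⁻¹ * ENNReal.ofReal (min (‖y‖ ^ 2) 1 * K y) := by
          refine setLIntegral_mono ?_ ?_
          · exact measurable_const.mul ((((measurable_norm.pow measurable_const).min
              measurable_const).mul hmeas).ennreal_ofReal)
          · intro y hy
            simp only [Set.mem_setOf_eq] at hy
            rcases le_or_gt (K y) 0 with hK | hK
            · simp [ENNReal.ofReal_of_nonpos hK]
            have hmin : c ≤ min (‖y‖ ^ 2) 1 := by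
              refine le_min (min_le_of_left_le ?_) (min_le_right _ _)
              have : ε ^ 2 ≤ ‖y‖ ^ 2 := by nlinarith [norm_nonneg y]
              linarith
            rw [← ENNReal.ofReal_mul (by positivity)]
            apply ENNReal.ofReal_le_ofReal
            have : c * K y ≤ min (‖y‖ ^ 2) 1 * K y :=
              mul_le_mul_of_nonneg_right hmin hK.le
            calc K y = c⁻¹ * (c * K y) := by field_simp
              _ ≤ c⁻¹ * (min (‖y‖ ^ 2) 1 * K y) := by
                  exact mul_le_mul_of_nonneg_left this (by positivity)
      _ ≤ ∫⁻ y, ENNReal.ofReal c⁻¹ * ENNReal.ofReal (min (‖y‖ ^ 2) 1 * K y) :=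
          setLIntegral_le_lintegral _ _
      _ = ENNReal.ofReal c⁻¹ * ∫⁻ x, ENNReal.ofReal (min (‖x‖ ^ 2) 1 * K x) :=
          lintegral_const_mul' _ _ ENNReal.ofReal_ne_top
  exact ne_top_of_le_ne_top (ENNReal.mul_ne_top ENNReal.ofReal_ne_top hint.ne) key

lemma tail_contra (N : ℕ) (hN : 1 ≤ N) (K : EuclideanSpace ℝ (Fin N) → ℝ)
    (hmeas : Measurable K)
    (hpos : ∀ x : EuclideanSpace ℝ (Fin N), x ≠ 0 → 0 < K x)
    (hint : kernelIntegrable N K)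
    (hmono : ∀ x y : EuclideanSpace ℝ (Fin N), x ≠ 0 → y ≠ 0 → ‖x‖ ≤ ‖y‖ → K y ≤ K x)
    (e : EuclideanSpace ℝ (Fin N)) (he : ‖e‖ = 1)
    {s s' M ε : ℝ} (hs : 0 < s) (hss' : s < s') (hM : 0 ≤ M) (hε : 0 < ε)
    (ht : Tendsto (fun r : ℝ => ENNReal.ofReal (r ^ (2 * s')) * kernelTail N K r)
      (𝓝[>] (0:ℝ)) (𝓝 ⊤))
    (hbd : ∀ ρ : ℝ, 0 < ρ → ρ < ε → ρ ^ ((N:ℝ) + 2*s) * K (ρ • e) ≤ M) : False := by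
  set c₁ : ℝ≥0∞ := volume (Metric.ball (0 : EuclideanSpace ℝ (Fin N)) 1) with hc₁
  set q : ℝ≥0∞ := ENNReal.ofReal ((2:ℝ) ^ (-(2*s))) with hq
  have hq1 : q < 1 := by
    rw [hq, ENNReal.ofReal_lt_one]
    exact Real.rpow_lt_one_of_one_lt_of_neg one_lt_two (by linarith)
  have hC : (1 - q)⁻¹ * c₁ ≠ ⊤ :=
    ENNReal.mul_ne_top (ENNReal.inv_ne_top.mpr (by
      rw [← pos_iff_ne_zero, tsub_pos_iff_lt]; exact hq1)) measure_ball_lt_top.ne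
  have htailε : kernelTail N K ε ≠ ⊤ := tail_ne_top N K hmeas hint hε
  -- upper bound function
  set g : ℝ → ℝ≥0∞ := fun r =>
    ENNReal.ofReal (M * 2^N * r ^ (2*s' - 2*s)) * ((1 - q)⁻¹ * c₁)
      + ENNReal.ofReal (r ^ (2*s')) * kernelTail N K ε with hg
  have hfg : ∀ᶠ r in 𝓝[>] (0:ℝ),
      ENNReal.ofReal (r ^ (2 * s')) * kernelTail N K r ≤ g r := by
    filter_upwards [Ioo_mem_nhdsGT_of_mem (by simp [hε] : (0:ℝ) ∈ Ico (0:ℝ) ε)] with r hr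
    obtain ⟨hr0, hrε⟩ := hr
    have hb := tail_bound N hN K hpos hmono e he hs hM hε hbd hr0 hrε
    calc ENNReal.ofReal (r ^ (2 * s')) * kernelTail N K r
        ≤ ENNReal.ofReal (r ^ (2 * s')) *
            (ENNReal.ofReal (M * 2^N * r ^ (-(2*s))) * ((1 - q)⁻¹ * c₁) + kernelTail N K ε) :=
          mul_le_mul_right hb _
      _ = g r := by
          rw [mul_add, hg]
          congr 1
          rw [← mul_assoc, ← ENNReal.ofReal_mul (by positivity)]
          congr 2
          rw [show 2*s' - 2*s = -(2*s) + 2*s' by ring, Real.rpow_add hr0]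
          ring
  have hg0 : Tendsto g (𝓝[>] (0:ℝ)) (𝓝 0) := by
    have l1 : ∀ a : ℝ, 0 < a → Tendsto (fun r : ℝ => r ^ a) (𝓝[>] (0:ℝ)) (𝓝 0) := by
      intro a ha
      have := (Real.continuousAt_rpow_const 0 a (Or.inr ha.le)).tendsto
      rw [Real.zero_rpow ha.ne'] at this
      exact this.mono_left nhdsWithin_le_nhds
    have t1 : Tendsto (fun r : ℝ => ENNReal.ofReal (M * 2^N * r ^ (2*s' - 2*s)))
        (𝓝[>] (0:ℝ)) (𝓝 0) := by
      have := ((l1 (2*s' - 2*s) (by linarith)).const_mul (M * 2^N))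
      rw [mul_zero] at this
      have := (ENNReal.continuous_ofReal.tendsto 0).comp this
      simpa [Function.comp_def] using this
    have t2 : Tendsto (fun r : ℝ => ENNReal.ofReal (r ^ (2*s')))
        (𝓝[>] (0:ℝ)) (𝓝 0) := by
      have := (ENNReal.continuous_ofReal.tendsto 0).comp (l1 (2*s') (by linarith))
      simpa [Function.comp_def] using this
    have := (ENNReal.Tendsto.mul_const t1 (Or.inr hC)).add
      (ENNReal.Tendsto.mul_const t2 (Or.inr htailε))
    simpa using this
  have hzero : Tendsto (fun r : ℝ => ENNReal.ofReal (r ^ (2 * s')) * kernelTail N K r)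
      (𝓝[>] (0:ℝ)) (𝓝 0) := by
    refine tendsto_of_tendsto_of_tendsto_of_le_of_le' tendsto_const_nhds hg0 ?_ hfg
    filter_upwards with r using zero_le
  exact ENNReal.top_ne_zero (tendsto_nhds_unique ht hzero)

theorem stmt5 (N : ℕ) (hN : 1 ≤ N) (K : EuclideanSpace ℝ (Fin N) → ℝ)
    (hmeas : Measurable K)
    (hpos : ∀ x : EuclideanSpace ℝ (Fin N), x ≠ 0 → 0 < K x)
    (hint : kernelIntegrable N K)
    (hmono : ∀ x y : EuclideanSpace ℝ (Fin N), x ≠ 0 → y ≠ 0 → ‖x‖ ≤ ‖y‖ → K y ≤ K x)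
    (hs0 : 0 < kernelS0 N K) :
    ∀ s : ℝ, 0 < s → s < kernelS0 N K →
      ∃ r : ℕ → ℝ, (∀ n, 0 < r n) ∧ Tendsto r atTop (𝓝 0) ∧
        Tendsto (fun n =>
          (r n) ^ ((N : ℝ) + 2 * s) *
            sInf (K '' {x : EuclideanSpace ℝ (Fin N) | ‖x‖ = r n})) atTop atTop := by
  intro s hs hss0
  set e : EuclideanSpace ℝ (Fin N) := EuclideanSpace.single (⟨0, hN⟩ : Fin N) (1:ℝ) with he'
  have he : ‖e‖ = 1 := by rw [he', EuclideanSpace.norm_single]; norm_num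
  -- obtain s' from the sSup
  rw [kernelS0] at hs0 hss0
  set S : Set ℝ := {t : ℝ | 0 ≤ t ∧
    Tendsto (fun r : ℝ => ENNReal.ofReal (r ^ (2 * t)) * kernelTail N K r)
      (𝓝[>] (0 : ℝ)) (𝓝 ⊤)} with hSdef
  have hSne : S.Nonempty := by
    by_contra h
    rw [Set.not_nonempty_iff_eq_empty] at h
    rw [h, Real.sSup_empty] at hs0; exact lt_irrefl _ hs0
  obtain ⟨s', hs'S, hss'⟩ := exists_lt_of_lt_csSup hSne hss0
  obtain ⟨hs'0, ht⟩ := hs'S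
  -- key existence claim
  have key : ∀ n : ℕ, ∃ ρ : ℝ, 0 < ρ ∧ ρ < 1/(n+1) ∧
      (n:ℝ) < ρ ^ ((N:ℝ) + 2*s) * K (ρ • e) := by
    intro n
    by_contra h
    push_neg at h
    exact tail_contra N hN K hmeas hpos hint hmono e he hs hss'
      (by positivity : (0:ℝ) ≤ (n:ℝ)) (by positivity : (0:ℝ) < 1/((n:ℝ)+1)) ht
      (fun ρ h1 h2 => h ρ h1 h2)
  choose ρ h1 h2 h3 using key
  have hsphere : ∀ n : ℕ, K '' {x : EuclideanSpace ℝ (Fin N) | ‖x‖ = ρ n} = {K (ρ n • e)} := by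
    intro n
    have hne : ‖ρ n • e‖ = ρ n := by
      rw [norm_smul, he, Real.norm_eq_abs, abs_of_pos (h1 n), mul_one]
    have hene : ρ n • e ≠ 0 := by
      intro h; rw [h, norm_zero] at hne; exact (h1 n).ne hne
    ext z
    constructor
    · rintro ⟨x, hx, rfl⟩
      simp only [Set.mem_setOf_eq] at hx
      have hx0 : x ≠ 0 := by
        intro h; rw [h, norm_zero] at hx; exact (h1 n).ne' hx.symm
      have l1 := hmono x (ρ n • e) hx0 hene (by rw [hne, hx])
      have l2 := hmono (ρ n • e) x hene hx0 (by rw [hne, hx])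
      simp [le_antisymm l2 l1]
    · rintro rfl
      exact ⟨ρ n • e, by simp [Set.mem_setOf_eq, hne], rfl⟩
  refine ⟨ρ, h1, ?_, ?_⟩
  · refine squeeze_zero (fun n => (h1 n).le) (fun n => (h2 n).le) ?_
    exact tendsto_one_div_add_atTop_nhds_zero_nat
  · have hrw : (fun n => (ρ n) ^ ((N : ℝ) + 2 * s) *
        sInf (K '' {x : EuclideanSpace ℝ (Fin N) | ‖x‖ = ρ n}))
        = fun n => (ρ n) ^ ((N : ℝ) + 2 * s) * K (ρ n • e) := by
      funext n; rw [hsphere n, csInf_singleton]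
    rw [hrw]
    exact tendsto_atTop_mono (fun n => (h3 n).le) tendsto_natCast_atTop_atTop
end

section
/- Let K satisfy the integrability condition, the radial monotonicity K(x) ≥ K(y) for |x| ≤ |y|, and suppose liminf_{r→0⁺} r^{2s₀} ∫_{|y|≥r} K(y)dy ∈ (0, ∞] where s₀ ∈ (0,1] is the critical exponent. Then there exists C > 0 such that for every x ∈ ℝ^N and every measurable set E ⊂ ℝ^N with 0 < |E| < ∞ sufficiently small, ∫_{E^c} K(x − y) dy ≥ C |E|^{−2s₀/N}. -/
open MeasureTheory Filter Topology Set
open scoped ENNReal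

theorem stmt6 (N : ℕ) (hN : 2 ≤ N) (K : EuclideanSpace ℝ (Fin N) → ℝ)
    (hmeas : Measurable K)
    (hpos : ∀ x : EuclideanSpace ℝ (Fin N), x ≠ 0 → 0 < K x)
    (hint : kernelIntegrable N K)
    (hmono : ∀ x y : EuclideanSpace ℝ (Fin N), x ≠ 0 → y ≠ 0 → ‖x‖ ≤ ‖y‖ → K y ≤ K x)
    (hs0 : 0 < kernelS0 N K ∧ kernelS0 N K ≤ 1)
    (hlinf : ∃ c : ℝ, 0 < c ∧ ∀ᶠ r in 𝓝[>] (0 : ℝ),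
      ENNReal.ofReal c ≤ ENNReal.ofReal (r ^ (2 * kernelS0 N K)) * kernelTail N K r) :
    ∃ C : ℝ, 0 < C ∧ ∃ δ : ℝ, 0 < δ ∧
      ∀ (x : EuclideanSpace ℝ (Fin N)) (E : Set (EuclideanSpace ℝ (Fin N))),
        MeasurableSet E → 0 < volume E → volume E ≤ ENNReal.ofReal δ →
        ENNReal.ofReal C * (volume E) ^ (-(2 * kernelS0 N K / N)) ≤
          ∫⁻ y in Eᶜ, ENNReal.ofReal (K (x - y)) := by
  classical
  obtain ⟨c, hc, hev⟩ := hlinf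
  set s₀ := kernelS0 N K with hs₀def
  have hs : 0 < s₀ := hs0.1
  have hNR : (0:ℝ) < N := by positivity
  haveI : Nonempty (Fin N) := ⟨⟨0, by omega⟩⟩
  haveI : Nontrivial (EuclideanSpace ℝ (Fin N)) := by
    refine ⟨EuclideanSpace.single ⟨0, by omega⟩ (1:ℝ), 0, ?_⟩
    intro h
    have := congrArg norm h
    rw [EuclideanSpace.norm_single, norm_zero, norm_one] at this
    exact one_ne_zero this
  -- extract ε from the eventual statement
  obtain ⟨ε, hε', hsub⟩ := mem_nhdsGT_iff_exists_Ioo_subset.mp hev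
  rw [Set.mem_Ioi] at hε'
  have hε : 0 < ε := hε'
  -- volume of unit ball
  set ω : ℝ := (volume (Metric.ball (0 : EuclideanSpace ℝ (Fin N)) 1)).toReal with hωdef
  have hballfin : volume (Metric.ball (0 : EuclideanSpace ℝ (Fin N)) 1) ≠ ⊤ :=
    (measure_ball_lt_top).ne
  have hω : 0 < ω := ENNReal.toReal_pos (Metric.measure_ball_pos _ _ one_pos).ne' hballfin
  refine ⟨c * ω ^ (2 * s₀ / N), by positivity, ω * ε ^ (N:ℝ) / 2, by positivity, ?_⟩
  intro x E hE hEpos hEδ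
  have hvfin : volume E ≠ ⊤ := (lt_of_le_of_lt hEδ ENNReal.ofReal_lt_top).ne
  set v : ℝ := (volume E).toReal with hvdef
  have hv : 0 < v := ENNReal.toReal_pos hEpos.ne' hvfin
  have hvδ : v ≤ ω * ε ^ (N:ℝ) / 2 :=
    ENNReal.toReal_le_of_le_ofReal (by positivity) hEδ
  set ρ : ℝ := (v / ω) ^ ((N:ℝ)⁻¹) with hρdef
  have hvω : 0 < v / ω := div_pos hv hω
  have hρ : 0 < ρ := Real.rpow_pos_of_pos hvω _
  have hρε : ρ < ε := by
    have h1 : v / ω < ε ^ (N:ℝ) := by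
      rw [div_lt_iff₀ hω]
      have hp : (0:ℝ) < ω * ε ^ (N:ℝ) := by positivity
      calc v ≤ ω * ε ^ (N:ℝ) / 2 := hvδ
        _ < ω * ε ^ (N:ℝ) := by linarith
        _ = ε ^ (N:ℝ) * ω := mul_comm _ _
    calc ρ < (ε ^ (N:ℝ)) ^ ((N:ℝ)⁻¹) :=
          Real.rpow_lt_rpow hvω.le h1 (by positivity)
      _ = ε := by
          rw [← Real.rpow_mul hε.le, mul_inv_cancel₀ hNR.ne', Real.rpow_one]
  -- the comparison ball
  set B := Metric.ball x ρ with hBdef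
  have hBmeas : MeasurableSet B := Metric.isOpen_ball.measurableSet
  have hρN : ρ ^ N = v / ω := by
    rw [← Real.rpow_natCast ρ N, hρdef, ← Real.rpow_mul hvω.le,
      inv_mul_cancel₀ hNR.ne', Real.rpow_one]
  have hBvol : volume B = volume E := by
    rw [hBdef, Measure.addHaar_ball volume x hρ.le, finrank_euclideanSpace_fin, hρN,
      ← ENNReal.ofReal_toReal hballfin, ← hωdef, ← ENNReal.ofReal_mul (by positivity),
      div_mul_cancel₀ _ hω.ne', hvdef, ENNReal.ofReal_toReal hvfin]
  -- reference point at radius ρ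
  set z₀ : EuclideanSpace ℝ (Fin N) := ρ • EuclideanSpace.single ⟨0, by omega⟩ (1:ℝ) with hz₀def
  have hz₀norm : ‖z₀‖ = ρ := by
    rw [hz₀def, norm_smul, EuclideanSpace.norm_single, norm_one, mul_one,
      Real.norm_eq_abs, abs_of_pos hρ]
  have hz₀ne : z₀ ≠ 0 := by
    intro h; rw [h, norm_zero] at hz₀norm; exact hρ.ne hz₀norm
  set f : EuclideanSpace ℝ (Fin N) → ℝ≥0∞ := fun y => ENNReal.ofReal (K (x - y)) with hfdef
  have hfmeas : Measurable f := (hmeas.comp (measurable_const.sub measurable_id)).ennreal_ofReal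
  -- lower bound inside the ball
  have hlow : ENNReal.ofReal (K z₀) * volume (Eᶜ ∩ B) ≤ ∫⁻ y in Eᶜ ∩ B, f y := by
    have hnull : volume ((Eᶜ ∩ B) \ {x}) = volume (Eᶜ ∩ B) :=
      measure_diff_null (measure_singleton x)
    calc ENNReal.ofReal (K z₀) * volume (Eᶜ ∩ B)
        = ∫⁻ _ in (Eᶜ ∩ B) \ {x}, ENNReal.ofReal (K z₀) := by
          rw [setLIntegral_const, hnull]
      _ ≤ ∫⁻ y in (Eᶜ ∩ B) \ {x}, f y := by
          refine setLIntegral_mono hfmeas ?_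
          intro y hy
          refine ENNReal.ofReal_le_ofReal ?_
          have hyx : y ≠ x := by
            intro h; exact hy.2 (by simp [h])
          have hne : x - y ≠ 0 := sub_ne_zero.mpr (Ne.symm hyx)
          refine hmono (x - y) z₀ hne hz₀ne ?_
          rw [hz₀norm]
          have hyB : y ∈ B := hy.1.2
          rw [hBdef, Metric.mem_ball, dist_eq_norm] at hyB
          rw [norm_sub_rev]
          exact hyB.le
      _ ≤ ∫⁻ y in Eᶜ ∩ B, f y := lintegral_mono_set diff_subset
  -- the two exchanged pieces have the same measure
  have hswap : volume (Eᶜ ∩ B) = volume (E ∩ Bᶜ) := by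
    have h1 : volume (B ∩ E) + volume (B \ E) = volume B := measure_inter_add_diff B hE
    have h2 : volume (E ∩ B) + volume (E \ B) = volume E := measure_inter_add_diff E hBmeas
    rw [inter_comm, hBvol] at h1
    have hfin2 : volume (E ∩ B) ≠ ⊤ :=
      fun h => hvfin (top_le_iff.mp (h ▸ measure_mono inter_subset_left))
    have key : volume (B \ E) = volume (E \ B) :=
      (ENNReal.add_right_inj hfin2).mp (h1.trans h2.symm)
    rw [Set.inter_comm, ← Set.diff_eq, key, Set.diff_eq]
  -- upper bound outside the ball
  have hupp : ∫⁻ y in E ∩ Bᶜ, f y ≤ ENNReal.ofReal (K z₀) * volume (E ∩ Bᶜ) := by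
    calc ∫⁻ y in E ∩ Bᶜ, f y ≤ ∫⁻ _ in E ∩ Bᶜ, ENNReal.ofReal (K z₀) := by
          refine setLIntegral_mono measurable_const ?_
          intro y hy
          refine ENNReal.ofReal_le_ofReal ?_
          have hyB : ρ ≤ ‖x - y‖ := by
            have := hy.2
            rw [hBdef, Set.mem_compl_iff, Metric.mem_ball, dist_eq_norm, not_lt] at this
            rwa [norm_sub_rev]
          have hne : x - y ≠ 0 := by
            intro h; rw [h, norm_zero] at hyB; exact absurd hyB (not_le.mpr hρ)
          refine hmono z₀ (x - y) hz₀ne hne ?_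
          rwa [hz₀norm]
      _ = ENNReal.ofReal (K z₀) * volume (E ∩ Bᶜ) := setLIntegral_const _ _
  -- splitting lemmas
  have hdisj1 : Disjoint (Eᶜ ∩ B) (Eᶜ ∩ Bᶜ) :=
    disjoint_compl_right.mono inter_subset_right inter_subset_right
  have hdisj2 : Disjoint (E ∩ Bᶜ) (Eᶜ ∩ Bᶜ) :=
    disjoint_compl_right.mono inter_subset_left inter_subset_left
  have hsplit1 : ∫⁻ y in Eᶜ, f y = (∫⁻ y in Eᶜ ∩ B, f y) + ∫⁻ y in Eᶜ ∩ Bᶜ, f y := by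
    calc ∫⁻ y in Eᶜ, f y = ∫⁻ y in (Eᶜ ∩ B) ∪ (Eᶜ ∩ Bᶜ), f y := by
          rw [← Set.inter_union_distrib_left, Set.union_compl_self, Set.inter_univ]
      _ = (∫⁻ y in Eᶜ ∩ B, f y) + ∫⁻ y in Eᶜ ∩ Bᶜ, f y := by
          exact lintegral_union (hE.compl.inter hBmeas.compl) hdisj1
  have hsplit2 : ∫⁻ y in Bᶜ, f y = (∫⁻ y in E ∩ Bᶜ, f y) + ∫⁻ y in Eᶜ ∩ Bᶜ, f y := by
    calc ∫⁻ y in Bᶜ, f y = ∫⁻ y in (E ∩ Bᶜ) ∪ (Eᶜ ∩ Bᶜ), f y := by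
          rw [← Set.union_inter_distrib_right, Set.union_compl_self, Set.univ_inter]
      _ = (∫⁻ y in E ∩ Bᶜ, f y) + ∫⁻ y in Eᶜ ∩ Bᶜ, f y := by
          exact lintegral_union (hE.compl.inter hBmeas.compl) hdisj2
  -- change of variables
  have hcov : ∫⁻ y in Bᶜ, f y = kernelTail N K ρ := by
    have hmp : MeasurePreserving (fun y => x - y)
        (volume : Measure (EuclideanSpace ℝ (Fin N))) volume :=
      Measure.measurePreserving_sub_left volume x
    have hemb : MeasurableEmbedding (fun y : EuclideanSpace ℝ (Fin N) => x - y) :=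
      (MeasurableEquiv.subLeft x).measurableEmbedding
    have hpre : (fun y : EuclideanSpace ℝ (Fin N) => x - y) ⁻¹'
        {y : EuclideanSpace ℝ (Fin N) | ρ ≤ ‖y‖} = Bᶜ := by
      ext y
      simp [hBdef, Metric.mem_ball, dist_eq_norm, norm_sub_rev, not_lt]
    calc ∫⁻ y in Bᶜ, f y
        = ∫⁻ y in (fun y : EuclideanSpace ℝ (Fin N) => x - y) ⁻¹'
            {y : EuclideanSpace ℝ (Fin N) | ρ ≤ ‖y‖}, ENNReal.ofReal (K (x - y)) := by
          rw [hpre]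
      _ = ∫⁻ z in {y : EuclideanSpace ℝ (Fin N) | ρ ≤ ‖y‖}, ENNReal.ofReal (K z) :=
          hmp.setLIntegral_comp_preimage_emb hemb (fun z => ENNReal.ofReal (K z)) _
      _ = kernelTail N K ρ := rfl
  -- main comparison
  have hmain : kernelTail N K ρ ≤ ∫⁻ y in Eᶜ, f y := by
    rw [hsplit1, ← hcov, hsplit2]
    refine add_le_add ?_ le_rfl
    calc ∫⁻ y in E ∩ Bᶜ, f y ≤ ENNReal.ofReal (K z₀) * volume (E ∩ Bᶜ) := hupp
      _ = ENNReal.ofReal (K z₀) * volume (Eᶜ ∩ B) := by rw [hswap]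
      _ ≤ ∫⁻ y in Eᶜ ∩ B, f y := hlow
  -- tail lower bound
  have hP : ENNReal.ofReal c ≤ ENNReal.ofReal (ρ ^ (2 * s₀)) * kernelTail N K ρ :=
    hsub ⟨hρ, hρε⟩
  have htail : ENNReal.ofReal c * (ENNReal.ofReal (ρ ^ (2 * s₀)))⁻¹ ≤ kernelTail N K ρ := by
    have ht0 : ENNReal.ofReal (ρ ^ (2 * s₀)) ≠ 0 :=
      (ENNReal.ofReal_pos.mpr (Real.rpow_pos_of_pos hρ _)).ne'
    have httop : ENNReal.ofReal (ρ ^ (2 * s₀)) ≠ ⊤ := ENNReal.ofReal_ne_top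
    calc ENNReal.ofReal c * (ENNReal.ofReal (ρ ^ (2*s₀)))⁻¹
        ≤ ENNReal.ofReal (ρ^(2*s₀)) * kernelTail N K ρ * (ENNReal.ofReal (ρ^(2*s₀)))⁻¹ :=
          mul_le_mul_left hP _
      _ = kernelTail N K ρ := by
          rw [mul_comm (ENNReal.ofReal (ρ^(2*s₀))), mul_assoc,
            ENNReal.mul_inv_cancel ht0 httop, mul_one]
  -- final arithmetic
  have harith : ENNReal.ofReal (c * ω ^ (2*s₀/N)) * (volume E) ^ (-(2*s₀/N))
      = ENNReal.ofReal c * (ENNReal.ofReal (ρ ^ (2*s₀)))⁻¹ := by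
    have hEeq : volume E = ENNReal.ofReal v := (ENNReal.ofReal_toReal hvfin).symm
    rw [hEeq, ENNReal.ofReal_rpow_of_pos hv,
      ← ENNReal.ofReal_inv_of_pos (Real.rpow_pos_of_pos hρ _),
      ← ENNReal.ofReal_mul (by positivity), ← ENNReal.ofReal_mul hc.le]
    congr 1
    have hρpow : ρ ^ (2*s₀) = (v/ω) ^ (2*s₀/N) := by
      rw [hρdef, ← Real.rpow_mul hvω.le]
      congr 1
      field_simp
    rw [hρpow, Real.div_rpow hv.le hω.le, Real.rpow_neg hv.le, inv_div]
    have h1 : v ^ (2*s₀/N) ≠ 0 := (Real.rpow_pos_of_pos hv _).ne'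
    field_simp
  calc ENNReal.ofReal (c * ω ^ (2*s₀/N)) * (volume E) ^ (-(2*s₀/N))
      = ENNReal.ofReal c * (ENNReal.ofReal (ρ ^ (2*s₀)))⁻¹ := harith
    _ ≤ kernelTail N K ρ := htail
    _ ≤ ∫⁻ y in Eᶜ, f y := hmain
end

section
/- Let s ∈ (0,1) with 2s < N, T > 1, n ∈ ℤ, and let (a_k)_{k∈ℤ} be a bounded, nonnegative, decreasing sequence with a_k = 0 for all k ≥ n. Then there exists a constant C = C(s, T, N) > 0, independent of n, such that ∑_{k∈ℤ} a_k^{1 − 2s/N} T^k ≤ C ∑_{k∈ℤ, a_k ≠ 0} a_{k+1} a_k^{−2s/N} T^k. -/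
open Filter Topology Set
open scoped ENNReal

theorem stmt8 (N : ℕ) (hN : 1 ≤ N) (s : ℝ) (hs : 0 < s) (hs1 : s < 1)
    (hsN : 2 * s < N) (T : ℝ) (hT : 1 < T) :
    ∃ C : ℝ, 0 < C ∧
      ∀ (n : ℤ) (a : ℤ → ℝ),
        (∃ M : ℝ, ∀ k, a k ≤ M) →
        (∀ k, 0 ≤ a k) →
        (∀ k l : ℤ, k ≤ l → a l ≤ a k) →
        (∀ k, n ≤ k → a k = 0) →
        (∑' k : ℤ, ENNReal.ofReal (a k ^ (1 - 2 * s / N) * T ^ k)) ≤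
          ENNReal.ofReal C *
            ∑' k : {k : ℤ // a k ≠ 0},
              ENNReal.ofReal (a ((k : ℤ) + 1) * a (k : ℤ) ^ (-(2 * s / N)) * T ^ (k : ℤ)) := by
  classical
  have hN0 : (0:ℝ) < N := by exact_mod_cast hN
  set α : ℝ := 2 * s / N with hαdef
  have hα0 : 0 < α := by positivity
  have hα1 : α < 1 := (div_lt_one hN0).2 hsN
  have hT0 : 0 < T := lt_trans one_pos hT
  have h1α : (0:ℝ) < 1 - α := by linarith
  have h2T1 : (1:ℝ) < 2 * T := by linarith
  set δ : ℝ := ((2*T)⁻¹) ^ ((1-α)⁻¹) with hδdef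
  have hδ0 : 0 < δ := Real.rpow_pos_of_pos (by positivity) _
  have hδ1 : δ < 1 := Real.rpow_lt_one (by positivity) (inv_lt_one_of_one_lt₀ h2T1) (by positivity)
  have hδpow : δ ^ (1-α) = (2*T)⁻¹ := by
    rw [hδdef, ← Real.rpow_mul (by positivity), inv_mul_cancel₀ h1α.ne', Real.rpow_one]
  refine ⟨4*T/δ, by positivity, ?_⟩
  rintro n a ⟨M, hM⟩ ha0 hdec han
  -- existence of a greatest "good" index below any k in the support
  have key : ∀ k : ℤ, a k ≠ 0 → ∃ g : ℤ, a g ≠ 0 ∧ δ * a g ≤ a (g+1) ∧ g ≤ k ∧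
      ∀ j : ℤ, a j ≠ 0 → δ * a j ≤ a (j+1) → j ≤ k → j ≤ g := by
    intro k hk
    have hak : 0 < a k := lt_of_le_of_ne (ha0 k) (Ne.symm hk)
    have Hinh : ∃ z : ℤ, (a z ≠ 0 ∧ δ * a z ≤ a (z+1)) ∧ z ≤ k := by
      by_contra hno
      have hbad : ∀ j : ℤ, j ≤ k → a (j+1) < δ * a j := by
        intro j hj
        have haj : 0 < a j := lt_of_lt_of_le hak (hdec j k hj)
        by_contra hle
        push_neg at hle
        exact hno ⟨j, ⟨ne_of_gt haj, hle⟩, hj⟩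
      have hchain : ∀ m : ℕ, a k ≤ δ ^ m * a (k - (m:ℤ)) := by
        intro m
        induction m with
        | zero => simp
        | succ m ih =>
          have e2 : (k - ((m+1 : ℕ) : ℤ)) = k - (m:ℤ) - 1 := by push_cast; ring
          rw [e2]
          have h1 := hbad (k - (m:ℤ) - 1) (by omega)
          have e1 : k - (m:ℤ) - 1 + 1 = k - (m:ℤ) := by ring
          rw [e1] at h1
          calc a k ≤ δ^m * a (k - (m:ℤ)) := ih
            _ ≤ δ^m * (δ * a (k - (m:ℤ) - 1)) := by
                exact mul_le_mul_of_nonneg_left h1.le (by positivity)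
            _ = δ^(m+1) * a (k - (m:ℤ) - 1) := by ring
      have hM1 : (0:ℝ) < max M 1 := lt_of_lt_of_le one_pos (le_max_right _ _)
      obtain ⟨m, hm⟩ := exists_pow_lt_of_lt_one (show (0:ℝ) < a k / (max M 1) by positivity) hδ1
      have hMk : a (k - (m:ℤ)) ≤ max M 1 := le_trans (hM _) (le_max_left _ _)
      have h5 : a k ≤ δ^m * max M 1 :=
        le_trans (hchain m) (mul_le_mul_of_nonneg_left hMk (by positivity))
      have h6 : δ^m * max M 1 < a k := by
        calc δ^m * max M 1 < (a k / max M 1) * max M 1 := mul_lt_mul_of_pos_right hm hM1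
          _ = a k := div_mul_cancel₀ _ (ne_of_gt hM1)
      linarith
    obtain ⟨g, ⟨⟨hg1, hg2⟩, hg3⟩, hgmax⟩ :=
      Int.exists_greatest_of_bdd ⟨k, fun z hz => hz.2⟩ Hinh
    exact ⟨g, hg1, hg2, hg3, fun j hj1 hj2 hj3 => hgmax j ⟨⟨hj1, hj2⟩, hj3⟩⟩
  choose g hg1 hg2 hg3 hgmax using key
  -- geometric decay along "bad" stretches
  have decay : ∀ (k : ℤ) (hk : a k ≠ 0) (m : ℕ), g k hk + 1 + (m:ℤ) ≤ k →
      a (g k hk + 1 + (m:ℤ)) ≤ δ ^ m * a (g k hk + 1) := by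
    intro k hk m
    induction m with
    | zero => intro _; simp
    | succ m ih =>
      intro hle
      have hle' : g k hk + 1 + (m:ℤ) ≤ k := by push_cast at hle; omega
      have haj : 0 < a (g k hk + 1 + (m:ℤ)) :=
        lt_of_lt_of_le (lt_of_le_of_ne (ha0 k) (Ne.symm hk)) (hdec _ k hle')
      have hnb : a (g k hk + 1 + (m:ℤ) + 1) < δ * a (g k hk + 1 + (m:ℤ)) := by
        by_contra hc
        push_neg at hc
        have := hgmax k hk (g k hk + 1 + (m:ℤ)) (ne_of_gt haj) hc hle'
        omega
      have e : g k hk + 1 + ((m+1 : ℕ):ℤ) = g k hk + 1 + (m:ℤ) + 1 := by push_cast; ring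
      rw [e]
      calc a (g k hk + 1 + (m:ℤ) + 1) ≤ δ * a (g k hk + 1 + (m:ℤ)) := hnb.le
        _ ≤ δ * (δ^m * a (g k hk + 1)) := mul_le_mul_of_nonneg_left (ih hle') hδ0.le
        _ = δ^(m+1) * a (g k hk + 1) := by ring
  -- the pointwise bound
  have bound : ∀ (k : ℤ) (hk : a k ≠ 0),
      a k ^ (1-α) * T ^ k ≤ (1/2:ℝ) ^ ((k - g k hk).toNat) *
        (2*T/δ * (a (g k hk + 1) * a (g k hk) ^ (-α) * T ^ (g k hk))) := by
    intro k hk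
    set gk := g k hk with hgkdef
    have hak : 0 < a k := lt_of_le_of_ne (ha0 k) (Ne.symm hk)
    have hagk : 0 < a gk := lt_of_le_of_ne (ha0 gk) (Ne.symm (hg1 k hk))
    have hagk1 : 0 < a (gk + 1) := lt_of_lt_of_le (mul_pos hδ0 hagk) (hg2 k hk)
    have hgkle : gk ≤ k := hg3 k hk
    have hTg : (0:ℝ) < T ^ gk := zpow_pos hT0 _
    have hXg : (0:ℝ) < a gk ^ (-α) := Real.rpow_pos_of_pos hagk _
    rcases eq_or_lt_of_le hgkle with he | hlt
    · -- k = gk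
      have hi : (k - gk).toNat = 0 := by omega
      rw [hi, pow_zero, one_mul, ← he]
      have e1 : a gk ^ (1-α) = a gk * a gk ^ (-α) := by
        rw [show (1:ℝ)-α = 1 + (-α) by ring, Real.rpow_add hagk, Real.rpow_one]
      have e2 : a gk ≤ 2*T/δ * a (gk+1) := by
        rw [div_mul_eq_mul_div, le_div_iff₀ hδ0]
        nlinarith [hg2 k hk, hagk1.le, h2T1]
      calc a gk ^ (1-α) * T ^ gk = a gk * (a gk ^ (-α) * T ^ gk) := by rw [e1]; ring
        _ ≤ (2*T/δ * a (gk+1)) * (a gk ^ (-α) * T ^ gk) :=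
            mul_le_mul_of_nonneg_right e2 (by positivity)
        _ = 2*T/δ * (a (gk+1) * a gk ^ (-α) * T ^ gk) := by ring
    · -- gk < k
      obtain ⟨m, hm⟩ : ∃ m : ℕ, k = gk + 1 + (m:ℤ) := ⟨(k - gk - 1).toNat, by omega⟩
      have hdk : a k ≤ δ ^ m * a (gk + 1) := by
        have := decay k hk m (by omega)
        rwa [← hm] at this
      have him : (k - gk).toNat = m + 1 := by omega
      have B : a (gk+1) ^ (-α) ≤ δ⁻¹ * a gk ^ (-α) := by
        have B1 : a (gk+1) ^ (-α) ≤ (δ * a gk) ^ (-α) :=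
          Real.rpow_le_rpow_of_nonpos (mul_pos hδ0 hagk) (hg2 k hk) (by linarith)
        have B2 : (δ * a gk) ^ (-α) = δ ^ (-α) * a gk ^ (-α) := Real.mul_rpow hδ0.le (ha0 _)
        have B3 : δ ^ (-α) ≤ δ⁻¹ := by
          rw [← Real.rpow_neg_one δ]
          exact Real.rpow_le_rpow_of_exponent_ge hδ0 hδ1.le (by linarith)
        calc a (gk+1) ^ (-α) ≤ δ ^ (-α) * a gk ^ (-α) := by rw [← B2]; exact B1
          _ ≤ δ⁻¹ * a gk ^ (-α) := mul_le_mul_of_nonneg_right B3 hXg.le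
      have A1 : a k ^ (1-α) ≤ ((2*T)⁻¹) ^ m * a (gk+1) ^ (1-α) := by
        calc a k ^ (1-α) ≤ (δ^m * a (gk+1)) ^ (1-α) :=
              Real.rpow_le_rpow (ha0 k) hdk h1α.le
          _ = (δ^m) ^ ((1:ℝ)-α) * a (gk+1) ^ (1-α) := Real.mul_rpow (by positivity) (ha0 _)
          _ = ((2*T)⁻¹) ^ m * a (gk+1) ^ (1-α) := by
              congr 1
              rw [← Real.rpow_natCast δ m, ← Real.rpow_mul hδ0.le,
                mul_comm ((m:ℝ)) ((1:ℝ)-α), Real.rpow_mul hδ0.le, hδpow, Real.rpow_natCast]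
      have A2 : a (gk+1) ^ (1-α) ≤ a (gk+1) * (δ⁻¹ * a gk ^ (-α)) := by
        have e1 : a (gk+1) ^ (1-α) = a (gk+1) * a (gk+1) ^ (-α) := by
          rw [show (1:ℝ)-α = 1 + (-α) by ring, Real.rpow_add hagk1, Real.rpow_one]
        rw [e1]
        exact mul_le_mul_of_nonneg_left B hagk1.le
      have A : a k ^ (1-α) ≤ ((2*T)⁻¹) ^ m * (a (gk+1) * (δ⁻¹ * a gk ^ (-α))) :=
        A1.trans (mul_le_mul_of_nonneg_left A2 (by positivity))
      have hTk : T ^ k = T ^ gk * T ^ (m+1 : ℕ) := by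
        rw [hm, show gk + 1 + (m:ℤ) = gk + ((m+1:ℕ):ℤ) by push_cast; ring,
          zpow_add₀ (ne_of_gt hT0), zpow_natCast]
      have key2 : ((2*T)⁻¹)^m * δ⁻¹ * T^(m+1:ℕ) = (1/2:ℝ)^(m+1) * (2*T/δ) := by
        field_simp
        have hTm : T ^ m * T⁻¹ ^ m = 1 := by rw [← mul_pow, mul_inv_cancel₀ hT0.ne', one_pow]
        rw [one_div, mul_inv, mul_pow, pow_succ, one_div, inv_pow, inv_pow, inv_pow]
        linear_combination (T * (2 ^ m)⁻¹) * hTm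
      rw [him, hTk]
      calc a k ^ (1-α) * (T ^ gk * T ^ (m+1:ℕ))
          ≤ (((2*T)⁻¹) ^ m * (a (gk+1) * (δ⁻¹ * a gk ^ (-α)))) * (T ^ gk * T ^ (m+1:ℕ)) :=
            mul_le_mul_of_nonneg_right A (by positivity)
        _ = (((2*T)⁻¹)^m * δ⁻¹ * T^(m+1:ℕ)) * (a (gk+1) * a gk ^ (-α) * T ^ gk) := by ring
        _ = ((1/2:ℝ)^(m+1) * (2*T/δ)) * (a (gk+1) * a gk ^ (-α) * T ^ gk) := by rw [key2]
        _ = (1/2:ℝ)^(m+1) * (2*T/δ * (a (gk+1) * a gk ^ (-α) * T ^ gk)) := by ring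
  -- now the summation argument
  have hsupp : Function.support (fun k : ℤ => ENNReal.ofReal (a k ^ ((1:ℝ)-α) * T ^ k)) ⊆
      {k : ℤ | a k ≠ 0} := by
    intro k hk
    simp only [Function.mem_support] at hk
    simp only [Set.mem_setOf_eq]
    intro h0
    apply hk
    rw [h0, Real.zero_rpow h1α.ne', zero_mul, ENNReal.ofReal_zero]
  have hι : Function.Injective
      (fun j : {j : ℤ // a j ≠ 0 ∧ δ * a j ≤ a (j+1)} => (⟨j.1, j.2.1⟩ : {k : ℤ // a k ≠ 0})) := by
    intro x y h
    have h1 : ((⟨x.1, x.2.1⟩ : {k : ℤ // a k ≠ 0}) : ℤ) = ((⟨y.1, y.2.1⟩ : {k : ℤ // a k ≠ 0}) : ℤ) :=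
      congrArg (fun z : {k : ℤ // a k ≠ 0} => (z : ℤ)) h
    exact Subtype.ext h1
  set F : {j : ℤ // a j ≠ 0 ∧ δ * a j ≤ a (j+1)} × ℕ → ℝ≥0∞ :=
    fun p => ENNReal.ofReal ((1/2:ℝ)^p.2 *
      (2*T/δ * (a ((p.1:ℤ) + 1) * a (p.1:ℤ) ^ (-α) * T ^ (p.1:ℤ)))) with hFdef
  set Φ : {k : ℤ | a k ≠ 0} → {j : ℤ // a j ≠ 0 ∧ δ * a j ≤ a (j+1)} × ℕ :=
    fun k => (⟨g k.1 k.2, hg1 k.1 k.2, hg2 k.1 k.2⟩, ((k.1:ℤ) - g k.1 k.2).toNat) with hΦdef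
  have hΦinj : Function.Injective Φ := by
    intro k k' h
    have h1 : g k.1 k.2 = g k'.1 k'.2 := congrArg (fun p => (p.1 : ℤ)) h
    have h2 : ((k.1:ℤ) - g k.1 k.2).toNat = ((k'.1:ℤ) - g k'.1 k'.2).toNat :=
      congrArg Prod.snd h
    have e1 : (0:ℤ) ≤ (k.1:ℤ) - g k.1 k.2 := by have := hg3 k.1 k.2; omega
    have e2 : (0:ℤ) ≤ (k'.1:ℤ) - g k'.1 k'.2 := by have := hg3 k'.1 k'.2; omega
    exact Subtype.ext (by omega)
  have inner : ∀ X : ℝ, 0 ≤ X →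
      ∑' i : ℕ, ENNReal.ofReal ((1/2:ℝ)^i * X) = ENNReal.ofReal (2 * X) := by
    intro X hX
    rw [← ENNReal.ofReal_tsum_of_nonneg (fun i => by positivity)
      ((summable_geometric_of_lt_one (by norm_num) (by norm_num)).mul_right X)]
    congr 1
    rw [tsum_mul_right, tsum_geometric_of_lt_one (by norm_num) (by norm_num)]
    norm_num
  calc (∑' k : ℤ, ENNReal.ofReal (a k ^ ((1:ℝ) - α) * T ^ k))
      = ∑' k : {k : ℤ | a k ≠ 0}, ENNReal.ofReal (a k ^ ((1:ℝ)-α) * T ^ (k:ℤ)) :=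
        (tsum_subtype_eq_of_support_subset hsupp).symm
    _ ≤ ∑' k : {k : ℤ | a k ≠ 0}, F (Φ k) := by
        apply ENNReal.tsum_le_tsum
        intro k
        exact ENNReal.ofReal_le_ofReal (bound k.1 k.2)
    _ ≤ ∑' p : {j : ℤ // a j ≠ 0 ∧ δ * a j ≤ a (j+1)} × ℕ, F p :=
        ENNReal.tsum_comp_le_tsum_of_injective hΦinj F
    _ = ∑' (j : {j : ℤ // a j ≠ 0 ∧ δ * a j ≤ a (j+1)}) (i : ℕ), F (j, i) :=
        ENNReal.tsum_prod'
    _ = ∑' (j : {j : ℤ // a j ≠ 0 ∧ δ * a j ≤ a (j+1)}),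
          ENNReal.ofReal (4*T/δ) *
            ENNReal.ofReal (a ((j:ℤ)+1) * a (j:ℤ) ^ (-α) * T ^ (j:ℤ)) := by
        apply tsum_congr
        intro j
        have hX : (0:ℝ) ≤ 2*T/δ * (a ((j:ℤ)+1) * a (j:ℤ) ^ (-α) * T ^ (j:ℤ)) := by
          have : 0 ≤ a ((j:ℤ)+1) := ha0 _
          have h2 : (0:ℝ) ≤ a (j:ℤ) ^ (-α) := Real.rpow_nonneg (ha0 _) _
          have h3 : (0:ℝ) ≤ T ^ (j:ℤ) := (zpow_pos hT0 _).le
          positivity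
        rw [show (∑' i : ℕ, F (j, i)) = ∑' i : ℕ, ENNReal.ofReal ((1/2:ℝ)^i *
          (2*T/δ * (a ((j:ℤ)+1) * a (j:ℤ) ^ (-α) * T ^ (j:ℤ)))) from rfl, inner _ hX,
          show 2 * (2*T/δ * (a ((j:ℤ)+1) * a (j:ℤ) ^ (-α) * T ^ (j:ℤ)))
            = 4*T/δ * (a ((j:ℤ)+1) * a (j:ℤ) ^ (-α) * T ^ (j:ℤ)) by ring,
          ENNReal.ofReal_mul (by positivity)]
    _ = ENNReal.ofReal (4*T/δ) *
          ∑' (j : {j : ℤ // a j ≠ 0 ∧ δ * a j ≤ a (j+1)}),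
            ENNReal.ofReal (a ((j:ℤ)+1) * a (j:ℤ) ^ (-α) * T ^ (j:ℤ)) :=
        ENNReal.tsum_mul_left
    _ ≤ ENNReal.ofReal (4*T/δ) *
          ∑' k : {k : ℤ // a k ≠ 0},
            ENNReal.ofReal (a ((k:ℤ)+1) * a (k:ℤ) ^ (-α) * T ^ (k:ℤ)) := by
        apply mul_le_mul_right
        exact ENNReal.tsum_comp_le_tsum_of_injective hι
          (fun k : {k : ℤ // a k ≠ 0} =>
            ENNReal.ofReal (a ((k:ℤ)+1) * a (k:ℤ) ^ (-α) * T ^ (k:ℤ)))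
end

section
/- Under the hypotheses of the kernel Sobolev inequality (kernel K with exponent s₀ ∈ (0,1] and bounded domain Ω ⊂ ℝ^N), the two norms on X₀ := {g : ℝ^N → ℝ measurable, g = 0 a.e. on Ω^c, energy finite} given by ‖g‖_X = (‖g‖²_{L²(Ω)} + ∬ |g(x)−g(y)|²K(x−y)dxdy)^{1/2} and ‖g‖_{X₀} = (∬ |g(x)−g(y)|²K(x−y)dxdy)^{1/2} are equivalent: there exists C > 0 with ‖g‖_{X₀} ≤ ‖g‖_X ≤ C ‖g‖_{X₀} for all g ∈ X₀. -/
open MeasureTheory Filter Topology Set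
open scoped ENNReal

noncomputable def kernelEnergy (N : ℕ) (K g : EuclideanSpace ℝ (Fin N) → ℝ) : ℝ≥0∞ :=
  ∫⁻ x : EuclideanSpace ℝ (Fin N), ∫⁻ y : EuclideanSpace ℝ (Fin N),
    ENNReal.ofReal ((g x - g y) ^ 2 * K (x - y))

theorem stmt11 (N : ℕ) (hN : 2 ≤ N) (K : EuclideanSpace ℝ (Fin N) → ℝ)
    (hmeas : Measurable K)
    (hpos : ∀ x : EuclideanSpace ℝ (Fin N), x ≠ 0 → 0 < K x)
    (hint : kernelIntegrable N K)
    (hsym : ∀ x : EuclideanSpace ℝ (Fin N), K (-x) = K x)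
    (hmono : ∀ x y : EuclideanSpace ℝ (Fin N), x ≠ 0 → y ≠ 0 → ‖x‖ ≤ ‖y‖ → K y ≤ K x)
    (hs0 : 0 < kernelS0 N K ∧ kernelS0 N K ≤ 1)
    (Ω : Set (EuclideanSpace ℝ (Fin N))) (hΩo : IsOpen Ω) (hΩb : Bornology.IsBounded Ω) :
    ∃ C : ℝ, 0 < C ∧
      ∀ g : EuclideanSpace ℝ (Fin N) → ℝ, Measurable g → (∀ x ∉ Ω, g x = 0) →
        kernelEnergy N K g < ⊤ →
        (kernelEnergy N K g) ^ ((1 : ℝ) / 2) ≤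
            ((∫⁻ x in Ω, ENNReal.ofReal ((g x) ^ 2)) + kernelEnergy N K g) ^ ((1 : ℝ) / 2) ∧
          ((∫⁻ x in Ω, ENNReal.ofReal ((g x) ^ 2)) + kernelEnergy N K g) ^ ((1 : ℝ) / 2) ≤
            ENNReal.ofReal C * (kernelEnergy N K g) ^ ((1 : ℝ) / 2) := by
  -- choose ρ > 0 with Ω ⊆ ball 0 ρ
  obtain ⟨r, hr⟩ := hΩb.subset_closedBall 0
  set ρ : ℝ := |r| + 1 with hρdef
  have hρ : 0 < ρ := by positivity
  have hΩρ : Ω ⊆ Metric.ball 0 ρ := fun x hx => by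
    have := hr hx
    simp only [Metric.mem_closedBall, dist_zero_right] at this
    simp only [Metric.mem_ball, dist_zero_right]
    have : ‖x‖ ≤ |r| := this.trans (le_abs_self r)
    linarith
  -- the tail mass c
  set S : Set (EuclideanSpace ℝ (Fin N)) := {z | 3 * ρ ≤ ‖z‖} with hSdef
  have hSmeas : MeasurableSet S := by
    have : S = (fun z : EuclideanSpace ℝ (Fin N) => ‖z‖) ⁻¹' (Ici (3 * ρ)) := rfl
    rw [this]; exact measurable_norm measurableSet_Ici
  set c : ℝ≥0∞ := ∫⁻ z in S, ENNReal.ofReal (K z) with hcdef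
  have hKmeas : Measurable fun z : EuclideanSpace ℝ (Fin N) => ENNReal.ofReal (K z) :=
    ENNReal.measurable_ofReal.comp hmeas
  -- c > 0
  have hcpos : 0 < c := by
    have hO : IsOpen {z : EuclideanSpace ℝ (Fin N) | 3 * ρ < ‖z‖} :=
      isOpen_lt continuous_const continuous_norm
    have hle : ∫⁻ z in {z : EuclideanSpace ℝ (Fin N) | 3 * ρ < ‖z‖}, ENNReal.ofReal (K z) ≤ c :=
      lintegral_mono_set (fun z hz => show 3 * ρ ≤ ‖z‖ from le_of_lt hz)
    refine lt_of_lt_of_le ?_ hle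
    rw [lintegral_pos_iff_support hKmeas]
    have hsub : {z : EuclideanSpace ℝ (Fin N) | 3 * ρ < ‖z‖} ⊆
        Function.support fun z => ENNReal.ofReal (K z) := by
      intro z hz
      have hz0 : z ≠ 0 := by
        intro h; rw [h] at hz; simp at hz; nlinarith
      simp only [Function.mem_support, ne_eq, ENNReal.ofReal_eq_zero, not_le]
      exact hpos z hz0
    rw [Measure.restrict_apply (measurableSet_support hKmeas)]
    have : {z : EuclideanSpace ℝ (Fin N) | 3 * ρ < ‖z‖} ⊆
        (Function.support fun z => ENNReal.ofReal (K z)) ∩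
          {z : EuclideanSpace ℝ (Fin N) | 3 * ρ < ‖z‖} := fun z hz => ⟨hsub hz, hz⟩
    refine lt_of_lt_of_le ?_ (measure_mono this)
    refine hO.measure_pos _ ?_
    refine ⟨EuclideanSpace.single ⟨0, by omega⟩ (3 * ρ + 1), ?_⟩
    simp only [mem_setOf_eq, EuclideanSpace.norm_single, Real.norm_eq_abs]
    rw [abs_of_pos (by linarith : (0:ℝ) < 3 * ρ + 1)]; linarith
  -- c < ∞
  have hcne : c ≠ ⊤ := by
    refine LT.lt.ne ?_
    set m : ℝ := min ((3 * ρ) ^ 2) 1 with hmdef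
    have hm : 0 < m := by
      apply lt_min _ one_pos; positivity
    have hbound : ∀ z ∈ S, ENNReal.ofReal (K z) ≤
        ENNReal.ofReal (1 / m) * ENNReal.ofReal (min (‖z‖ ^ 2) 1 * K z) := by
      intro z hz
      have hz0 : z ≠ 0 := by
        intro h; rw [hSdef] at hz; simp [h] at hz; nlinarith
      have hK0 : 0 ≤ K z := (hpos z hz0).le
      have hzn : 3 * ρ ≤ ‖z‖ := hz
      have hmin : m ≤ min (‖z‖ ^ 2) 1 := by
        apply le_min _ (min_le_right _ _)
        calc m ≤ (3 * ρ) ^ 2 := min_le_left _ _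
          _ ≤ ‖z‖ ^ 2 := by nlinarith [norm_nonneg z]
      rw [← ENNReal.ofReal_mul (by positivity)]
      apply ENNReal.ofReal_le_ofReal
      rw [← mul_assoc]
      have h1 : 1 ≤ 1 / m * (‖z‖ ^ 2 ⊓ 1) := by
        rw [one_div, inv_mul_eq_div]
        exact (one_le_div hm).mpr hmin
      nlinarith [mul_le_mul_of_nonneg_right h1 hK0]
    calc c ≤ ∫⁻ z in S, ENNReal.ofReal (1 / m) * ENNReal.ofReal (min (‖z‖ ^ 2) 1 * K z) :=
          setLIntegral_mono (by
            exact (ENNReal.measurable_ofReal.comp ((measurable_norm.pow_const 2).min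
              measurable_const |>.mul hmeas)).const_mul _) hbound
      _ = ENNReal.ofReal (1 / m) * ∫⁻ z in S, ENNReal.ofReal (min (‖z‖ ^ 2) 1 * K z) :=
          lintegral_const_mul _ (ENNReal.measurable_ofReal.comp
            ((measurable_norm.pow_const 2).min measurable_const |>.mul hmeas))
      _ ≤ ENNReal.ofReal (1 / m) * ∫⁻ z, ENNReal.ofReal (min (‖z‖ ^ 2) 1 * K z) := by
          gcongr; exact Measure.restrict_le_self
      _ < ⊤ := ENNReal.mul_lt_top ENNReal.ofReal_lt_top hint
  -- the constant
  refine ⟨(c⁻¹ + 1).toReal, ?_, ?_⟩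
  · have : (1 : ℝ≥0∞) ≤ c⁻¹ + 1 := le_add_self
    have hne : c⁻¹ + 1 ≠ ⊤ := by
      simp [ENNReal.add_ne_top, ENNReal.inv_ne_top, hcpos.ne']
    have := ENNReal.toReal_mono hne this
    simpa using lt_of_lt_of_le one_pos this
  intro g hg hg0 hE
  set E := kernelEnergy N K g with hEdef
  set I := ∫⁻ x in Ω, ENNReal.ofReal ((g x) ^ 2) with hIdef
  constructor
  · exact ENNReal.rpow_le_rpow le_add_self (by norm_num)
  -- key estimate: c * I ≤ E
  have hkey : c * I ≤ E := by
    have hpoint : ∀ x ∈ Ω, ENNReal.ofReal ((g x) ^ 2) * c ≤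
        ∫⁻ y, ENNReal.ofReal ((g x - g y) ^ 2 * K (x - y)) := by
      intro x hx
      have hxρ : ‖x‖ < ρ := by
        have := hΩρ hx; simpa [Metric.mem_ball, dist_zero_right] using this
      set T := fun y : EuclideanSpace ℝ (Fin N) => x - y with hTdef
      have hTmp : MeasurePreserving T volume volume := Measure.measurePreserving_sub_left volume x
      have hTemb : MeasurableEmbedding T := (MeasurableEquiv.subLeft x).measurableEmbedding
      have him : ∫⁻ y in T ⁻¹' S, ENNReal.ofReal (K (x - y)) = c := by
        have := hTmp.setLIntegral_comp_preimage_emb hTemb (fun z => ENNReal.ofReal (K z)) S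
        simpa [hTdef] using this
      calc ENNReal.ofReal ((g x) ^ 2) * c
          = ∫⁻ y in T ⁻¹' S, ENNReal.ofReal ((g x) ^ 2) * ENNReal.ofReal (K (x - y)) := by
            have hm2 : Measurable fun y : EuclideanSpace ℝ (Fin N) =>
                ENNReal.ofReal (K (x - y)) :=
              (hmeas.comp (measurable_const.sub measurable_id)).ennreal_ofReal
            rw [lintegral_const_mul _ hm2, him]
        _ = ∫⁻ y in T ⁻¹' S, ENNReal.ofReal ((g x - g y) ^ 2 * K (x - y)) := by
            apply setLIntegral_congr_fun (hTemb.measurable hSmeas)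
            intro y hy
            beta_reduce
            have hyS : 3 * ρ ≤ ‖x - y‖ := hy
            have hyΩ : y ∉ Ω := by
              intro hyΩ
              have : ‖y‖ < ρ := by
                have := hΩρ hyΩ; simpa [Metric.mem_ball, dist_zero_right] using this
              have : ‖x - y‖ ≤ ‖x‖ + ‖y‖ := norm_sub_le x y
              linarith
            rw [hg0 y hyΩ, sub_zero, ENNReal.ofReal_mul (by positivity)]
        _ ≤ ∫⁻ y, ENNReal.ofReal ((g x - g y) ^ 2 * K (x - y)) :=
            setLIntegral_le_lintegral _ _
    calc c * I = ∫⁻ x in Ω, ENNReal.ofReal ((g x) ^ 2) * c := by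
          rw [mul_comm, hIdef, ← lintegral_mul_const c ((hg.pow_const 2).ennreal_ofReal)]
      _ ≤ ∫⁻ x in Ω, ∫⁻ y, ENNReal.ofReal ((g x - g y) ^ 2 * K (x - y)) :=
          setLIntegral_mono' hΩo.measurableSet hpoint
      _ ≤ E := setLIntegral_le_lintegral _ _
  have hI : I ≤ c⁻¹ * E := by
    calc I = c⁻¹ * (c * I) := by
          rw [← mul_assoc, ENNReal.inv_mul_cancel hcpos.ne' hcne, one_mul]
      _ ≤ c⁻¹ * E := by gcongr
  have hsum : I + E ≤ (c⁻¹ + 1) * E := by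
    rw [add_mul, one_mul]; exact add_le_add hI le_rfl
  have hDne : c⁻¹ + 1 ≠ ⊤ := by
    simp [ENNReal.add_ne_top, ENNReal.inv_ne_top, hcpos.ne']
  have hD1 : (1 : ℝ≥0∞) ≤ c⁻¹ + 1 := le_add_self
  calc (I + E) ^ ((1 : ℝ) / 2)
      ≤ ((c⁻¹ + 1) * E) ^ ((1 : ℝ) / 2) := ENNReal.rpow_le_rpow hsum (by norm_num)
    _ = (c⁻¹ + 1) ^ ((1 : ℝ) / 2) * E ^ ((1 : ℝ) / 2) :=
        ENNReal.mul_rpow_of_nonneg _ _ (by norm_num)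
    _ ≤ (c⁻¹ + 1) * E ^ ((1 : ℝ) / 2) := by
        gcongr ?_ * _
        calc (c⁻¹ + 1) ^ ((1 : ℝ) / 2) ≤ (c⁻¹ + 1) ^ (1 : ℝ) :=
            ENNReal.rpow_le_rpow_of_exponent_le hD1 (by norm_num)
          _ = c⁻¹ + 1 := ENNReal.rpow_one _
    _ = ENNReal.ofReal ((c⁻¹ + 1).toReal) * E ^ ((1 : ℝ) / 2) := by
        rw [ENNReal.ofReal_toReal hDne]
end
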